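/- arXiv:1111.7172 — 4 statements merged into one kernel-verified Lean document; each statement's English description precedes it below -/
import Mathlib

section
/- Let d ≥ 3 and n ≥ 2 be integers, let w ∈ G(d,d,n) with w ≤_T γ, and let (t_1,…,t_k) be a reduced T-word for w. Then the reflections t_1,…,t_k are pairwise distinct. -/
open Matrix Complex

/-- The primitive `d`-th root of unity `ζ_d = exp(2πi/d)`. -/
noncomputable def zetaC (d : ℕ) : ℂ := Complex.exp (2 * (Real.pi : ℂ) * Complex.I / (d : ℂ))

/-- The ambient group of invertible `n × n` complex matrices. -/
abbrev GLn (n : ℕ) := GL (Fin n) ℂ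

/-- Membership in `G(d,d,n)`: monomial matrices whose nonzero entries are `d`-th roots of
unity with product `1`. -/
def IsGdd (d n : ℕ) (w : GLn n) : Prop :=
  ∃ (σ : Equiv.Perm (Fin n)) (z : Fin n → ℂ),
    (∀ j, z j ^ d = 1) ∧ (∏ j, z j) = 1 ∧
    ∀ k l : Fin n, (w : Matrix (Fin n) (Fin n) ℂ) k l = if k = σ l then z l else 0

/-- The fixed space `{x : ℂⁿ | w x = x}` of `w`. -/
noncomputable def fixSpace {n : ℕ} (w : GLn n) : Submodule ℂ (Fin n → ℂ) :=
  LinearMap.ker ((w : Matrix (Fin n) (Fin n) ℂ).mulVecLin - LinearMap.id)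

/-- A reflection of `G(d,d,n)`: an element of the group of finite order whose fixed space
has dimension `n - 1`. -/
def IsGddRefl (d n : ℕ) (t : GLn n) : Prop :=
  IsGdd d n t ∧ IsOfFinOrder t ∧ Module.finrank ℂ (fixSpace t) = n - 1

/-- The absolute (reflection) length `ℓ_T`. -/
noncomputable def ellT (d n : ℕ) (w : GLn n) : ℕ :=
  sInf {k | ∃ l : List (GLn n), l.length = k ∧ (∀ t ∈ l, IsGddRefl d n t) ∧ l.prod = w}

/-- The absolute order `u ≤_T v`. -/
def absLe (d n : ℕ) (u v : GLn n) : Prop :=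
  ellT d n v = ellT d n u + ellT d n (u⁻¹ * v)

/-- The matrix of the Coxeter element `γ = [1⁰ 2⁰ … (n−1)⁰][n⁰]⁻¹`:
`γ e_i = e_{i+1}` for `1 ≤ i ≤ n−2` (1-based), `γ e_{n−1} = ζ_d e_1`, `γ e_n = ζ_d⁻¹ e_n`. -/
noncomputable def gammaMat (d n : ℕ) : Matrix (Fin n) (Fin n) ℂ :=
  Matrix.of fun k l : Fin n =>
    if (l : ℕ) + 2 < n ∧ (k : ℕ) = (l : ℕ) + 1 then 1
    else if (l : ℕ) + 2 = n ∧ (k : ℕ) = 0 then zetaC d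
    else if (l : ℕ) + 1 = n ∧ k = l then (zetaC d)⁻¹
    else 0

/-- The matrix of the reflection `((i⁰ jˢ))` (1-based indices `i < j`): it sends
`e_i ↦ ζ_dˢ e_j`, `e_j ↦ ζ_d⁻ˢ e_i` and fixes the other basis vectors. -/
noncomputable def reflMat (d n : ℕ) (i j s : ℕ) : Matrix (Fin n) (Fin n) ℂ :=
  Matrix.of fun k l : Fin n =>
    if (l : ℕ) + 1 = i ∧ (k : ℕ) + 1 = j then zetaC d ^ s
    else if (l : ℕ) + 1 = j ∧ (k : ℕ) + 1 = i then (zetaC d ^ s)⁻¹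
    else if k = l ∧ (k : ℕ) + 1 ≠ i ∧ (k : ℕ) + 1 ≠ j then 1
    else 0

/-- Reduced `T`-words for `w`. -/
def IsReducedTWord (d n : ℕ) (w : GLn n) (l : List (GLn n)) : Prop :=
  (∀ t ∈ l, IsGddRefl d n t) ∧ l.prod = w ∧ l.length = ellT d n w

/-- The set `T_γ` of reflections below `γ` in absolute order. -/
def TgammaSet (d n : ℕ) (γ : GLn n) : Set (GLn n) :=
  {t : GLn n | IsGddRefl d n t ∧ absLe d n t γ}

/-- The list of (1-based) triples `(i, j, s)` indexing the reflections `((i⁰ jˢ))` of `T_γ`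
in the order `≺`: first `((i⁰ j⁰))` with `1 ≤ i < j ≤ n−1` lexicographically, then for each
`i = 1, …, n−1` the block `((i⁰ n⁰)), ((i⁰ n^{d−1})), …, ((i⁰ n¹)),
((i⁰ (i+1)^{d−1})), …, ((i⁰ (n−1)^{d−1}))`. -/
def reflTriples (d n : ℕ) : List (ℕ × ℕ × ℕ) :=
  ((List.range' 1 (n - 2)).flatMap fun i =>
    (List.range' (i + 1) (n - 1 - i)).map fun j => (i, j, 0)) ++
  ((List.range' 1 (n - 1)).flatMap fun i =>
    ((i, n, 0) :: ((List.range' 1 (d - 1)).map fun r => (i, n, d - r))) ++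
    ((List.range' (i + 1) (n - 1 - i)).map fun j => (i, j, d - 1)))

/-- `a` occurs (strictly) before `b` in the list `l`. -/
def ListBefore {α : Type*} (l : List α) (a b : α) : Prop :=
  ∃ l1 l2 l3 : List α, l = l1 ++ a :: (l2 ++ b :: l3)

/-- The total order `≺` on `T_γ`. -/
def precRel (d n : ℕ) (t t' : GLn n) : Prop :=
  ∃ p q : ℕ × ℕ × ℕ,
    (t : Matrix (Fin n) (Fin n) ℂ) = reflMat d n p.1 p.2.1 p.2.2 ∧
    (t' : Matrix (Fin n) (Fin n) ℂ) = reflMat d n q.1 q.2.1 q.2.2 ∧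
    ListBefore (reflTriples d n) p q

section ELShellability

variable {P : Type*} {Λ : Type*}

/-- `b` covers `a` with respect to the relation `le`. -/
def CovRel (le : P → P → Prop) (a b : P) : Prop :=
  le a b ∧ a ≠ b ∧ ∀ c, le a c → le c b → c = a ∨ c = b

/-- `c` is a maximal (i.e. saturated) chain of the interval `[x, y]`: a sequence of covers
starting at `x` and ending at `y`. -/
def IsMaxChainIn (le : P → P → Prop) (x y : P) (c : List P) : Prop :=
  c.Chain' (CovRel le) ∧ c.head? = some x ∧ c.getLast? = some y

/-- The label sequence of a chain `c` under the edge labeling `lab`. -/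
def labelSeq (lab : P → P → Λ) (c : List P) : List Λ :=
  (c.zip c.tail).map fun p => lab p.1 p.2

/-- `lab` is an EL-labeling with respect to the order `le` on `P` and the (strict) order
`lt` on the label poset `Λ`: every closed interval has exactly one maximal chain with
strictly increasing label sequence, and this chain is lexicographically strictly smaller
than every other maximal chain of the interval. -/
def IsELLabeling (le : P → P → Prop) (lt : Λ → Λ → Prop) (lab : P → P → Λ) : Prop :=
  ∀ x y : P, le x y →
    ∃ c : List P, IsMaxChainIn le x y c ∧ (labelSeq lab c).Chain' lt ∧
      ∀ c' : List P, IsMaxChainIn le x y c' → c' ≠ c →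
        ¬ (labelSeq lab c').Chain' lt ∧ List.Lex lt (labelSeq lab c) (labelSeq lab c')

/-- EL-shellability: existence of an EL-labeling into some strictly ordered label type. -/
def IsELShellable (le : P → P → Prop) : Prop :=
  ∃ (Λ' : Type) (lt : Λ' → Λ' → Prop), IsStrictOrder Λ' lt ∧
    ∃ lab : P → P → Λ', IsELLabeling le lt lab

end ELShellability

/-- The set of `m`-divisible noncrossing partitions `NC^{(m)}` (as `(m+1)`-tuples). -/
def NCmSet (d n m : ℕ) (γ : GLn n) : Set (Fin (m + 1) → GLn n) :=
  {w | (List.ofFn w).prod = γ ∧ (∑ i, ellT d n (w i)) = ellT d n γ}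

/-- The order on `m`-divisible noncrossing partitions:
`(u₀; u₁, …, u_m) ≤ (v₀; v₁, …, v_m)` iff `v_i ≤_T u_i` for all `1 ≤ i ≤ m`. -/
def NCmLe (d n : ℕ) {m : ℕ} (u v : Fin (m + 1) → GLn n) : Prop :=
  ∀ i : Fin (m + 1), i ≠ 0 → absLe d n (v i) (u i)

section Shifts

variable {G : Type*} [Monoid G]

/-- The left-shift of a word at (1-based) position `i`:
`(t₁, …, t_{i−2}, t_i, t_i t_{i−1} t_i, t_{i+1}, …, t_k)`. -/
def leftShiftAt (l : List G) (i : ℕ) : List G :=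
  l.take (i - 2) ++ [l.getD (i - 1) 1, l.getD (i - 1) 1 * l.getD (i - 2) 1 * l.getD (i - 1) 1]
    ++ l.drop i

/-- The right-shift of a word at (1-based) position `i`:
`(t₁, …, t_{i−1}, t_i t_{i+1} t_i, t_i, t_{i+2}, …, t_k)`. -/
def rightShiftAt (l : List G) (i : ℕ) : List G :=
  l.take (i - 1) ++ [l.getD (i - 1) 1 * l.getD i 1 * l.getD (i - 1) 1, l.getD (i - 1) 1]
    ++ l.drop (i + 1)

/-- One left-shift step between words. -/
def LeftShiftStep (l l' : List G) : Prop :=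
  ∃ i, 2 ≤ i ∧ i ≤ l.length ∧ l' = leftShiftAt l i

/-- The word `l` has a descent at (1-based) position `p` with respect to the strict
relation `lt`, i.e. `t_p ≻ t_{p+1}`. -/
def HasDescentAt (lt : G → G → Prop) (l : List G) (p : ℕ) : Prop :=
  lt (l.getD p 1) (l.getD (p - 1) 1)

end Shifts

/-- A `γ`-compatible reflection ordering (Definition 4.2 of the paper): for all
non-commuting reflections `t₁, t₂ ≤_T γ` and every rank-2 element `x ≤_T γ` above both,
there is exactly one ordered pair `(a, b)` of reflections below `x` with `ab = x` and
`a ≺ b`. -/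
def IsCompatibleOrdering (d n : ℕ) (γ : GLn n) (lt : GLn n → GLn n → Prop) : Prop :=
  ∀ t1 t2 : GLn n, IsGddRefl d n t1 → IsGddRefl d n t2 →
    absLe d n t1 γ → absLe d n t2 γ → t1 * t2 ≠ t2 * t1 →
    ∀ x : GLn n, ellT d n x = 2 → absLe d n x γ → absLe d n t1 x → absLe d n t2 x →
      ∃! p : GLn n × GLn n, IsGddRefl d n p.1 ∧ IsGddRefl d n p.2 ∧
        absLe d n p.1 x ∧ absLe d n p.2 x ∧ p.1 * p.2 = x ∧ lt p.1 p.2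
section Aux

/-- `G(d,d,n)` is closed under multiplication. -/
lemma isGdd_mul {d n : ℕ} {a b : GLn n} (ha : IsGdd d n a) (hb : IsGdd d n b) :
    IsGdd d n (a * b) := by
  obtain ⟨σ, z, hz, hzp, hσ⟩ := ha
  obtain ⟨τ, y, hy, hyp, hτ⟩ := hb
  refine ⟨τ.trans σ, fun l => z (τ l) * y l, ?_, ?_, ?_⟩
  · intro j; rw [mul_pow, hz, hy, one_mul]
  · rw [Finset.prod_mul_distrib, Equiv.prod_comp τ z, hzp, hyp, one_mul]
  · intro k l
    rw [Units.val_mul, Matrix.mul_apply]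
    simp only [hσ, hτ]
    rw [Finset.sum_eq_single (τ l)]
    · simp only [Equiv.trans_apply, if_pos rfl]
      split_ifs with h <;> simp_all
    · intro m _ hm; simp [hm]
    · intro h; exact absurd (Finset.mem_univ _) h

/-- The determinant of an element of `G(d,d,n)` is `±1`. -/
lemma isGdd_det {d n : ℕ} {w : GLn n} (h : IsGdd d n w) :
    (w : Matrix (Fin n) (Fin n) ℂ).det = 1 ∨ (w : Matrix (Fin n) (Fin n) ℂ).det = -1 := by
  obtain ⟨σ, z, hz, hzp, hσ⟩ := h
  have hM : (w : Matrix (Fin n) (Fin n) ℂ) = (σ⁻¹.permMatrix ℂ) * Matrix.diagonal z := by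
    ext k l
    rw [hσ, Matrix.mul_diagonal]
    simp only [Equiv.Perm.permMatrix, PEquiv.toMatrix_apply, Equiv.toPEquiv_apply,
      Option.mem_def, Option.some.injEq]
    by_cases h : k = σ l
    · subst h; simp
    · rw [if_neg h, if_neg, zero_mul]
      intro hl
      exact h (by rw [← hl]; simp)
  rw [hM, Matrix.det_mul, Matrix.det_permutation, Matrix.det_diagonal, hzp, mul_one]
  rcases Int.units_eq_one_or (Equiv.Perm.sign σ⁻¹) with h | h <;> rw [h] <;> simp

/-- Every reflection of `G(d,d,n)` is an involution. -/
lemma gddRefl_sq {d n : ℕ} (hn : 1 ≤ n) {t : GLn n} (ht : IsGddRefl d n t) : t * t = 1 := by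
  obtain ⟨hgdd, hford, hfix⟩ := ht
  set M : Matrix (Fin n) (Fin n) ℂ := (t : Matrix (Fin n) (Fin n) ℂ) with hMdef
  set N : Matrix (Fin n) (Fin n) ℂ := M - 1 with hNdef
  have hM1 : M = 1 + N := by rw [hNdef]; abel
  have hker : fixSpace t = LinearMap.ker N.mulVecLin := by
    ext x
    simp only [fixSpace, LinearMap.mem_ker, LinearMap.sub_apply, LinearMap.id_apply,
      Matrix.mulVecLin_apply, hNdef, Matrix.sub_mulVec, Matrix.one_mulVec, ← hMdef]
  have hfr : Module.finrank ℂ (LinearMap.ker N.mulVecLin) = n - 1 := by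
    rw [← hker]; exact hfix
  have hNne : N ≠ 0 := by
    intro h0
    rw [h0] at hfr
    have : LinearMap.ker (0 : Matrix (Fin n) (Fin n) ℂ).mulVecLin = ⊤ := by
      ext x; simp
    rw [this] at hfr
    rw [finrank_top, Module.finrank_pi] at hfr
    simp only [Fintype.card_fin] at hfr
    omega
  have hrange : Module.finrank ℂ (LinearMap.range N.mulVecLin) = 1 := by
    have h1 := LinearMap.finrank_range_add_finrank_ker N.mulVecLin
    rw [hfr, Module.finrank_pi] at h1
    simp only [Fintype.card_fin] at h1
    omega
  obtain ⟨u₀, hu0ne, hu0⟩ := finrank_eq_one_iff'.mp hrange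
  set u : Fin n → ℂ := (u₀ : Fin n → ℂ) with hudef
  choose v hv using fun l : Fin n =>
    hu0 ⟨N.mulVecLin (Pi.single l 1), LinearMap.mem_range_self _ _⟩
  have hN : ∀ k l, N k l = u k * v l := by
    intro k l
    have h1 := congrArg (Subtype.val) (hv l)
    have h2 := congrFun h1 k
    simp only [Submodule.coe_smul, Pi.smul_apply, Matrix.mulVecLin_apply,
      Matrix.mulVec_single, mul_one, smul_eq_mul, MulOpposite.op_one, one_smul] at h2
    exact h2.symm.trans (mul_comm _ _)
  set c : ℂ := v ⬝ᵥ u with hcdef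
  have hNN : N * N = c • N := by
    ext k l
    rw [Matrix.mul_apply, Matrix.smul_apply, smul_eq_mul]
    calc ∑ m, N k m * N m l = ∑ m, (v m * u m) * (u k * v l) := by
          refine Finset.sum_congr rfl fun m _ => ?_
          rw [hN, hN]; ring
      _ = c * N k l := by
          rw [← Finset.sum_mul, hN k l, hcdef, dotProduct]
  have key : ∀ m : ℕ, ∃ s : ℂ, M ^ m = 1 + s • N ∧ (c = 0 → s = m) := by
    intro m
    induction m with
    | zero => exact ⟨0, by simp, by simp⟩
    | succ m ih =>
      obtain ⟨s, hs, hs0⟩ := ih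
      refine ⟨1 + s + s * c, ?_, ?_⟩
      · rw [pow_succ, hs, hM1, mul_add, mul_one, add_mul, one_mul, Matrix.smul_mul, hNN]
        module
      · intro hc
        rw [hs0 hc, hc]
        push_cast
        ring
  obtain ⟨m, hm, hpow⟩ := isOfFinOrder_iff_pow_eq_one.mp hford
  have hMm : M ^ m = 1 := by
    have := congrArg (Units.val) hpow
    rw [Units.val_pow_eq_pow_val, Units.val_one] at this
    exact this
  obtain ⟨s, hs, hs0⟩ := key m
  have hsN : s • N = 0 := by
    rw [hMm] at hs
    exact (left_eq_add.mp hs)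
  have hs_zero : s = 0 := by
    rcases smul_eq_zero.mp hsN with h | h
    · exact h
    · exact absurd h hNne
  have hc_ne : c ≠ 0 := by
    intro hc
    rw [hs0 hc] at hs_zero
    have : m = 0 := by exact_mod_cast hs_zero
    omega
  have hdet : M.det = 1 + c := by
    have hNvv : N = Matrix.vecMulVec u v := by
      ext k l; rw [hN, Matrix.vecMulVec_apply]
    rw [hM1, hNvv, Matrix.vecMulVec_eq Unit, Matrix.det_one_add_replicateCol_mul_replicateRow]
  have hc2 : c = -2 := by
    rcases isGdd_det hgdd with h | h
    · rw [← hMdef] at h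
      rw [hdet] at h
      exact absurd (by linear_combination h) hc_ne
    · rw [← hMdef] at h
      rw [hdet] at h
      linear_combination h
  have hMM : M * M = 1 := by
    rw [hM1, mul_add, mul_one, add_mul, one_mul, hNN, hc2]
    module
  apply Units.ext
  rw [Units.val_mul, Units.val_one, ← hMdef, hMM]

/-- The fixed space of a conjugate has the same dimension. -/
lemma finrank_fixSpace_conj {n : ℕ} (g r : GLn n) :
    Module.finrank ℂ (fixSpace (g * r * g⁻¹)) = Module.finrank ℂ (fixSpace r) := by
  set G : Matrix (Fin n) (Fin n) ℂ := (g : Matrix (Fin n) (Fin n) ℂ) with hG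
  set G' : Matrix (Fin n) (Fin n) ℂ := ((g⁻¹ : GLn n) : Matrix (Fin n) (Fin n) ℂ) with hG'
  have hGG' : G * G' = 1 := by
    rw [hG, hG', ← Units.val_mul, mul_inv_cancel, Units.val_one]
  have hG'G : G' * G = 1 := by
    rw [hG, hG', ← Units.val_mul, inv_mul_cancel, Units.val_one]
  let e : (Fin n → ℂ) ≃ₗ[ℂ] (Fin n → ℂ) :=
    LinearEquiv.ofLinear G.mulVecLin G'.mulVecLin
      (by rw [← Matrix.mulVecLin_mul, hGG', Matrix.mulVecLin_one])
      (by rw [← Matrix.mulVecLin_mul, hG'G, Matrix.mulVecLin_one])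
  have hmap : fixSpace (g * r * g⁻¹) = (fixSpace r).map (e : (Fin n → ℂ) →ₗ[ℂ] (Fin n → ℂ)) := by
    ext x
    simp only [fixSpace, LinearMap.mem_ker, LinearMap.sub_apply, LinearMap.id_apply,
      Matrix.mulVecLin_apply, Submodule.mem_map, sub_eq_zero]
    have hcoe : ((g * r * g⁻¹ : GLn n) : Matrix (Fin n) (Fin n) ℂ)
        = G * (r : Matrix (Fin n) (Fin n) ℂ) * G' := by
      rw [Units.val_mul, Units.val_mul, hG, hG']
    constructor
    · intro hx
      refine ⟨G' *ᵥ x, ?_, ?_⟩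
      · have h1 : G' *ᵥ ((G * (r : Matrix (Fin n) (Fin n) ℂ) * G') *ᵥ x) = G' *ᵥ x := by
          rw [hcoe] at hx; rw [hx]
        rw [Matrix.mulVec_mulVec, ← Matrix.mul_assoc, ← Matrix.mul_assoc, hG'G,
          Matrix.one_mul, ← Matrix.mulVec_mulVec] at h1
        exact h1
      · show G.mulVecLin (G' *ᵥ x) = x
        rw [Matrix.mulVecLin_apply, Matrix.mulVec_mulVec, hGG', Matrix.one_mulVec]
    · rintro ⟨y, hy, hyx⟩
      have hyx' : G *ᵥ y = x := hyx
      rw [hcoe, ← hyx', Matrix.mulVec_mulVec, Matrix.mul_assoc, Matrix.mul_assoc, hG'G,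
        Matrix.mul_one, ← Matrix.mulVec_mulVec, hy]
  rw [hmap]
  exact LinearEquiv.finrank_map_eq e (fixSpace r)

/-- Conjugating a reflection by a reflection yields a reflection. -/
lemma isGddRefl_conj {d n : ℕ} (hn : 1 ≤ n) {t r : GLn n}
    (ht : IsGddRefl d n t) (hr : IsGddRefl d n r) : IsGddRefl d n (t * r * t) := by
  have htt : t * t = 1 := gddRefl_sq hn ht
  have hinv : t⁻¹ = t := inv_eq_of_mul_eq_one_right htt
  refine ⟨isGdd_mul (isGdd_mul ht.1 hr.1) ht.1, ?_, ?_⟩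
  · obtain ⟨m, hm, hpm⟩ := isOfFinOrder_iff_pow_eq_one.mp hr.2.1
    refine isOfFinOrder_iff_pow_eq_one.mpr ⟨m, hm, ?_⟩
    rw [show t * r * t = t * r * t⁻¹ by rw [hinv], conj_pow, hpm, mul_one, mul_inv_cancel]
  · rw [show t * r * t = t * r * t⁻¹ by rw [hinv], finrank_fixSpace_conj]
    exact hr.2.2

/-- A list that is not `Nodup` contains a repeated letter. -/
lemma exists_dup_split {α : Type*} (l : List α) (h : ¬ l.Nodup) :
    ∃ (a : α) (l1 l2 l3 : List α), l = l1 ++ a :: (l2 ++ a :: l3) := by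
  induction l with
  | nil => exact absurd List.nodup_nil h
  | cons x xs ih =>
    rw [List.nodup_cons] at h
    by_cases hx : x ∈ xs
    · obtain ⟨s, t, hst⟩ := List.append_of_mem hx
      exact ⟨x, [], s, t, by simp [hst]⟩
    · have hxs : ¬ xs.Nodup := fun hnd => h ⟨hx, hnd⟩
      obtain ⟨a, l1, l2, l3, he⟩ := ih hxs
      exact ⟨a, x :: l1, l2, l3, by simp [he]⟩

end Aux

/-- For `w ≤_T γ`, the letters of any reduced `T`-word for `w` are
pairwise distinct. -/
theorem reduced_word_nodup
    (d n : ℕ) (hd : 3 ≤ d) (hn : 2 ≤ n)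
    (γ w : GLn n) (hγ : (γ : Matrix (Fin n) (Fin n) ℂ) = gammaMat d n)
    (hw : absLe d n w γ)
    (l : List (GLn n)) (hl : IsReducedTWord d n w l) :
    l.Nodup := by
  by_contra hnd
  obtain ⟨t, l1, l2, l3, hsplit⟩ := exists_dup_split l hnd
  obtain ⟨hrefl, hprod, hlen⟩ := hl
  have htmem : t ∈ l := by rw [hsplit]; simp
  have ht : IsGddRefl d n t := hrefl t htmem
  have hn1 : 1 ≤ n := le_trans one_le_two hn
  have htt : t * t = 1 := gddRefl_sq hn1 ht
  have hinv : t⁻¹ = t := inv_eq_of_mul_eq_one_right htt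
  set l' : List (GLn n) := l1 ++ (l2.map fun r => t * r * t) ++ l3 with hl'
  have hmem : ∀ r ∈ l', IsGddRefl d n r := by
    intro r hr
    rw [hl'] at hr
    simp only [List.mem_append, List.mem_map] at hr
    rcases hr with (hr | ⟨r', hr', rfl⟩) | hr
    · exact hrefl r (by rw [hsplit]; simp [hr])
    · exact isGddRefl_conj hn1 ht (hrefl r' (by rw [hsplit]; simp [hr']))
    · exact hrefl r (by rw [hsplit]; simp [hr])
  have hmap : ∀ m : List (GLn n), (m.map fun r => t * r * t).prod = t * m.prod * t := by
    intro m
    induction m with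
    | nil =>
      simp only [List.map_nil, List.prod_nil, mul_one]
      exact htt.symm
    | cons x xs ih =>
      simp only [List.map_cons, List.prod_cons, ih]
      calc (t * x * t) * (t * xs.prod * t) = t * x * ((t * t) * (xs.prod * t)) := by
            simp [mul_assoc]
        _ = t * (x * xs.prod) * t := by rw [htt]; simp [mul_assoc]
  have hprod' : l'.prod = w := by
    rw [← hprod, hsplit, hl', List.prod_append, List.prod_append, hmap l2]
    simp only [List.prod_append, List.prod_cons, mul_assoc]
  have hlen' : l'.length ∈
      {k | ∃ m : List (GLn n), m.length = k ∧ (∀ t ∈ m, IsGddRefl d n t) ∧ m.prod = w} :=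
    ⟨l', rfl, hmem, hprod'⟩
  have hle : ellT d n w ≤ l'.length := Nat.sInf_le hlen'
  have hlenl : l.length = l1.length + l2.length + l3.length + 2 := by
    rw [hsplit]
    simp only [List.length_append, List.length_cons]
    omega
  have hlenl' : l'.length = l1.length + l2.length + l3.length := by
    rw [hl']
    simp only [List.length_append, List.length_map]
  rw [hlenl'] at hle
  rw [← hlen, hlenl] at hle
  omega
end

section
/- Let d ≥ 3 and n ≥ 2 be integers, let w ∈ G(d,d,n) with w ≤_T γ, and let ≺ be a total order on T_γ that is a γ-compatible reflection ordering. Then the restriction of ≺ to T_w = {t ∈ T : t ≤_T w} is a w-compatible reflection ordering: for all t_1, t_2 ∈ T_w with t_1t_2 ≠ t_2t_1 and every x ∈ G(d,d,n) with ℓ_T(x) = 2, x ≤_T w, t_1 ≤_T x and t_2 ≤_T x, there is exactly one ordered pair (a,b) of reflections with a ≤_T x, b ≤_T x, ab = x and a ≺ b. -/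
open Matrix Complex

section AuxTrans

variable {d n : ℕ}

/-- The set of lengths of `T`-words for `a`. -/
def Sset (d n : ℕ) (a : GLn n) : Set ℕ :=
  {k | ∃ l : List (GLn n), l.length = k ∧ (∀ t ∈ l, IsGddRefl d n t) ∧ l.prod = a}

lemma ellT_eq_sInf (a : GLn n) : ellT d n a = sInf (Sset d n a) := rfl

lemma ellT_le {a : GLn n} {k : ℕ} (h : k ∈ Sset d n a) : ellT d n a ≤ k :=
  Nat.sInf_le h

lemma ellT_mem {a : GLn n} (h : (Sset d n a).Nonempty) :
    ellT d n a ∈ Sset d n a := Nat.sInf_mem h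

lemma nonempty_of_ellT_pos {a : GLn n} (h : 0 < ellT d n a) :
    (Sset d n a).Nonempty := by
  by_contra hc
  rw [Set.not_nonempty_iff_eq_empty] at hc
  rw [ellT_eq_sInf, hc, Nat.sInf_empty] at h
  exact Nat.lt_irrefl 0 h

lemma mul_mem_Sset {a b : GLn n} {ka kb : ℕ}
    (ha : ka ∈ Sset d n a) (hb : kb ∈ Sset d n b) :
    ka + kb ∈ Sset d n (a * b) := by
  obtain ⟨la, hla, hra, hpa⟩ := ha
  obtain ⟨lb, hlb, hrb, hpb⟩ := hb
  refine ⟨la ++ lb, by simp [hla, hlb], ?_, by simp [List.prod_append, hpa, hpb]⟩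
  intro t ht
  rcases List.mem_append.mp ht with h | h
  · exact hra t h
  · exact hrb t h

lemma Sset_mul_nonempty {a b : GLn n}
    (ha : (Sset d n a).Nonempty) (hb : (Sset d n b).Nonempty) :
    (Sset d n (a * b)).Nonempty := by
  obtain ⟨ka, hka⟩ := ha
  obtain ⟨kb, hkb⟩ := hb
  exact ⟨ka + kb, mul_mem_Sset hka hkb⟩

lemma refl_inv_word {t : GLn n} (ht : IsGddRefl d n t) :
    (Sset d n t⁻¹).Nonempty := by
  have hfin : IsOfFinOrder t := ht.2.1
  have hpos : 0 < orderOf t := hfin.orderOf_pos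
  have hpow : t ^ (orderOf t - 1) * t = 1 := by
    rw [← pow_succ, Nat.sub_add_cancel hpos, pow_orderOf_eq_one]
  have hinv : t ^ (orderOf t - 1) = t⁻¹ := eq_inv_of_mul_eq_one_left hpow
  refine ⟨orderOf t - 1, List.replicate (orderOf t - 1) t, List.length_replicate, ?_, ?_⟩
  · intro s hs
    rw [List.eq_of_mem_replicate hs]
    exact ht
  · rw [List.prod_replicate, hinv]

lemma Sset_inv_nonempty {a : GLn n} (ha : (Sset d n a).Nonempty) :
    (Sset d n a⁻¹).Nonempty := by
  obtain ⟨k, l, hlen, hrefl, hprod⟩ := ha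
  clear hlen
  induction l generalizing a with
  | nil => exact ⟨0, [], rfl, by simp, by simp [← hprod]⟩
  | cons t l ih =>
    have hrefl' : ∀ s ∈ l, IsGddRefl d n s := fun s hs => hrefl s (List.mem_cons_of_mem _ hs)
    have h1 : (Sset d n (l.prod)⁻¹).Nonempty := ih hrefl' rfl
    have h2 : (Sset d n t⁻¹).Nonempty := refl_inv_word (hrefl t List.mem_cons_self)
    have : a⁻¹ = (l.prod)⁻¹ * t⁻¹ := by rw [← hprod]; simp [List.prod_cons, _root_.mul_inv_rev]
    rw [this]
    exact Sset_mul_nonempty h1 h2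

lemma ellT_mul_le {a b : GLn n}
    (ha : (Sset d n a).Nonempty) (hb : (Sset d n b).Nonempty) :
    ellT d n (a * b) ≤ ellT d n a + ellT d n b :=
  ellT_le (mul_mem_Sset (ellT_mem ha) (ellT_mem hb))

/-- Transitivity of the absolute order along genuinely expressible elements. -/
lemma absLe_trans_aux {u v g : GLn n}
    (hu : (Sset d n u).Nonempty) (hv : 0 < ellT d n v)
    (huv : absLe d n u v) (hvg : absLe d n v g) : absLe d n u g := by
  have hvN : (Sset d n v).Nonempty := nonempty_of_ellT_pos hv
  have hgpos : 0 < ellT d n g := by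
    unfold absLe at hvg; omega
  have hgN : (Sset d n g).Nonempty := nonempty_of_ellT_pos hgpos
  have huinv := Sset_inv_nonempty hu
  have hvinv := Sset_inv_nonempty hvN
  have huvN : (Sset d n (u⁻¹ * v)).Nonempty := Sset_mul_nonempty huinv hvN
  have hvgN : (Sset d n (v⁻¹ * g)).Nonempty := Sset_mul_nonempty hvinv hgN
  have hugN : (Sset d n (u⁻¹ * g)).Nonempty := Sset_mul_nonempty huinv hgN
  have h1 : ellT d n (u⁻¹ * g) ≤ ellT d n (u⁻¹ * v) + ellT d n (v⁻¹ * g) := by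
    have := ellT_mul_le huvN hvgN
    rwa [show (u⁻¹ * v) * (v⁻¹ * g) = u⁻¹ * g by group] at this
  have h2 : ellT d n g ≤ ellT d n u + ellT d n (u⁻¹ * g) := by
    have := ellT_mul_le hu hugN
    rwa [show u * (u⁻¹ * g) = g by group] at this
  unfold absLe at *
  omega

end AuxTrans

/-- A `γ`-compatible reflection ordering restricts to a `w`-compatible
reflection ordering for every `w ≤_T γ`. -/
theorem compatible_ordering_restricts
    (d n : ℕ) (hd : 3 ≤ d) (hn : 2 ≤ n)
    (γ : GLn n) (hγ : (γ : Matrix (Fin n) (Fin n) ℂ) = gammaMat d n)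
    (w : GLn n) (hw : absLe d n w γ)
    (lt : GLn n → GLn n → Prop)
    (hirr : ∀ t ∈ TgammaSet d n γ, ¬ lt t t)
    (htrans : ∀ a ∈ TgammaSet d n γ, ∀ b ∈ TgammaSet d n γ, ∀ c ∈ TgammaSet d n γ,
      lt a b → lt b c → lt a c)
    (htot : ∀ a ∈ TgammaSet d n γ, ∀ b ∈ TgammaSet d n γ, a ≠ b → lt a b ∨ lt b a)
    (hcompat : IsCompatibleOrdering d n γ lt) :
    IsCompatibleOrdering d n w lt := by
  intro t1 t2 ht1 ht2 ht1w ht2w hcomm x hx hxw ht1x ht2x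
  have hxpos : 0 < ellT d n x := by omega
  have hxN : (Sset d n x).Nonempty := nonempty_of_ellT_pos hxpos
  have hwpos : 0 < ellT d n w := by unfold absLe at hxw; omega
  have hxg : absLe d n x γ := absLe_trans_aux hxN hwpos hxw hw
  have ht1N : (Sset d n t1).Nonempty :=
    ⟨1, [t1], rfl, by simpa using ht1, by simp⟩
  have ht2N : (Sset d n t2).Nonempty :=
    ⟨1, [t2], rfl, by simpa using ht2, by simp⟩
  have ht1g : absLe d n t1 γ := absLe_trans_aux ht1N hxpos ht1x hxg
  have ht2g : absLe d n t2 γ := absLe_trans_aux ht2N hxpos ht2x hxg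
  exact hcompat t1 t2 ht1 ht2 ht1g ht2g hcomm x hx hxg ht1x ht2x
end

section
/- Let d ≥ 3 and n ≥ 2 be integers, and let s_i = ((i^0 (i+1)^0)) for 1 ≤ i ≤ n−1 and s_n = (((n−1)^0 n^1)). Then (s_1, s_2, …, s_n) is a reduced T-word for γ, and for every 1 < k ≤ n the left-shift at k, namely (s_1,…,s_{k−2}, s_k, s_k s_{k−1} s_k, s_{k+1},…,s_n), has a descent at k−1 with respect to the total order ≺. -/
open Matrix Complex

/-! ### Auxiliary machinery -/

section Aux

lemma zeta_prim (d : ℕ) (hd : d ≠ 0) : IsPrimitiveRoot (zetaC d) d :=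
  Complex.isPrimitiveRoot_exp d hd

lemma zeta_pow_d (d : ℕ) (hd : d ≠ 0) : zetaC d ^ d = 1 := (zeta_prim d hd).pow_eq_one

lemma zeta_ne_zero (d : ℕ) : zetaC d ≠ 0 := Complex.exp_ne_zero _

lemma zeta_ne_one (d : ℕ) (hd : 2 ≤ d) : zetaC d ≠ 1 :=
  (zeta_prim d (by omega)).ne_one (by omega)

noncomputable def monoMat {n : ℕ} (σ : Equiv.Perm (Fin n)) (z : Fin n → ℂ) :
    Matrix (Fin n) (Fin n) ℂ :=
  Matrix.of fun k l => if k = σ l then z l else 0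

lemma monoMat_mul {n : ℕ} (σ τ : Equiv.Perm (Fin n)) (z w : Fin n → ℂ) :
    monoMat σ z * monoMat τ w = monoMat (σ * τ) (fun l => z (τ l) * w l) := by
  ext k l
  simp only [Matrix.mul_apply, monoMat, Matrix.of_apply, ite_mul, mul_ite, zero_mul, mul_zero,
    Equiv.Perm.mul_apply]
  rw [Finset.sum_ite_eq' Finset.univ (τ l) (fun m => if k = σ m then z m * w l else 0)]
  simp
  exact if_congr Iff.rfl rfl rfl

lemma monoMat_one {n : ℕ} : (monoMat 1 (fun _ => (1:ℂ)) : Matrix (Fin n) (Fin n) ℂ) = 1 := by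
  ext k l
  simp [monoMat, Matrix.one_apply]
  exact if_congr Iff.rfl rfl rfl

lemma monoMat_congr {n : ℕ} (σ : Equiv.Perm (Fin n)) (z w : Fin n → ℂ)
    (h : ∀ l, z l = w l) : monoMat σ z = monoMat σ w := by
  ext k l
  simp only [monoMat, Matrix.of_apply, h l]

lemma mul_monoMat {n : ℕ} (A : Matrix (Fin n) (Fin n) ℂ) (σ : Equiv.Perm (Fin n)) (z : Fin n → ℂ) :
    A * monoMat σ z = Matrix.of fun k l => A k (σ l) * z l := by
  ext k l
  simp only [Matrix.mul_apply, monoMat, Matrix.of_apply, mul_ite, mul_zero]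
  rw [Finset.sum_ite_eq' Finset.univ (σ l) (fun m => A k m * z l)]
  simp

lemma reflMat_eq_mono (d n i j s : ℕ) (h1 : 1 ≤ i) (hij : i < j) (hjn : j ≤ n) :
    reflMat d n i j s = monoMat (Equiv.swap ⟨i-1, by omega⟩ ⟨j-1, by omega⟩)
      (fun l => if (l:ℕ) = i-1 then zetaC d ^ s else if (l:ℕ) = j-1 then (zetaC d ^ s)⁻¹ else 1) := by
  ext k l
  rcases k with ⟨k, hk⟩; rcases l with ⟨l, hl⟩
  simp only [reflMat, monoMat, Matrix.of_apply, Equiv.swap_apply_def, Fin.mk.injEq, Fin.ext_iff]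
  split_ifs <;> simp_all <;> omega

/-- cycle matrix: `e_l ↦ e_{l+1}` for `l < m`, `e_m ↦ e_0`, fixes `e_l` for `l > m`. -/
noncomputable def cyc (n m : ℕ) : Matrix (Fin n) (Fin n) ℂ :=
  Matrix.of fun k l : Fin n =>
    if (l : ℕ) < m ∧ (k : ℕ) = (l : ℕ) + 1 then 1
    else if (l : ℕ) = m ∧ (k : ℕ) = 0 then 1
    else if k = l ∧ m < (l : ℕ) then 1
    else 0

lemma cyc_zero (n : ℕ) : cyc n 0 = 1 := by
  ext k l
  rcases k with ⟨k, hk⟩; rcases l with ⟨l, hl⟩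
  simp only [cyc, Matrix.of_apply, Matrix.one_apply, Fin.mk.injEq, Fin.ext_iff]
  split_ifs <;> simp_all <;> omega

lemma cyc_step (d n m : ℕ) (h : m + 2 ≤ n) :
    cyc n m * reflMat d n (m+1) (m+2) 0 = cyc n (m+1) := by
  rw [reflMat_eq_mono d n (m+1) (m+2) 0 (by omega) (by omega) h, mul_monoMat]
  ext k l
  rcases k with ⟨k, hk⟩; rcases l with ⟨l, hl⟩
  simp only [cyc, Matrix.of_apply, Equiv.swap_apply_def, Fin.mk.injEq, Fin.ext_iff, pow_zero,
    inv_one, Nat.add_sub_cancel]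
  split_ifs <;> simp_all <;> omega

set_option maxHeartbeats 1000000 in
lemma cyc_last (d n : ℕ) (hn : 2 ≤ n) :
    cyc n (n-1) * reflMat d n (n-1) n 1 = gammaMat d n := by
  rw [reflMat_eq_mono d n (n-1) n 1 (by omega) (by omega) le_rfl, mul_monoMat]
  ext k l
  rcases k with ⟨k, hk⟩; rcases l with ⟨l, hl⟩
  simp only [cyc, gammaMat, Matrix.of_apply, Equiv.swap_apply_def, Fin.mk.injEq, Fin.ext_iff,
    Fin.val_mk, pow_one]
  split_ifs <;> simp only [Fin.val_mk, true_and, and_true, one_mul, zero_mul] at * <;>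
    first
    | rfl
    | omega
    | (exfalso; omega)

lemma mem_fixSpace {n : ℕ} (w : GLn n) (x : Fin n → ℂ) :
    x ∈ fixSpace w ↔ (w : Matrix (Fin n) (Fin n) ℂ).mulVec x = x := by
  simp only [fixSpace, LinearMap.mem_ker, LinearMap.sub_apply, LinearMap.id_apply,
    Matrix.mulVecLin_apply, sub_eq_zero]

lemma monoMat_mulVec {n : ℕ} (σ : Equiv.Perm (Fin n)) (z : Fin n → ℂ) (x : Fin n → ℂ) :
    (monoMat σ z).mulVec x = fun k => z (σ⁻¹ k) * x (σ⁻¹ k) := by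
  funext k
  simp only [Matrix.mulVec, dotProduct, monoMat, Matrix.of_apply, ite_mul, zero_mul]
  have h : ∀ l : Fin n, (k = σ l) ↔ (l = σ⁻¹ k) := by
    intro l
    constructor
    · intro h; simp [h]
    · intro h; simp [h]
  simp only [h]
  rw [Finset.sum_ite_eq' Finset.univ (σ⁻¹ k) (fun l => z l * x l)]
  simp

lemma isRefl_of_reflMat (d n i j s : ℕ) (hd : d ≠ 0) (h1 : 1 ≤ i) (hij : i < j) (hjn : j ≤ n)
    (t : GLn n) (ht : (t : Matrix (Fin n) (Fin n) ℂ) = reflMat d n i j s) :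
    IsGddRefl d n t := by
  have hn : 1 ≤ n := le_trans (le_trans (by omega) hij) hjn
  set a : Fin n := ⟨i - 1, by omega⟩ with ha
  set b : Fin n := ⟨j - 1, by omega⟩ with hb
  have hab : a ≠ b := by simp [ha, hb, Fin.ext_iff]; omega
  set c : ℂ := zetaC d ^ s with hc
  have hc0 : c ≠ 0 := pow_ne_zero _ (zeta_ne_zero d)
  set z : Fin n → ℂ := fun l => if (l:ℕ) = i-1 then c else if (l:ℕ) = j-1 then c⁻¹ else 1 with hz
  have hza : z a = c := by simp [hz, ha]
  have hzb : z b = c⁻¹ := by simp [hz, hb, Fin.ext_iff]; intro h; omega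
  have hmono : (t : Matrix (Fin n) (Fin n) ℂ) = monoMat (Equiv.swap a b) z := by
    rw [ht, reflMat_eq_mono d n i j s h1 hij hjn]
  refine ⟨⟨Equiv.swap a b, z, ?_, ?_, ?_⟩, ?_, ?_⟩
  · intro l
    have hcd : c ^ d = 1 := by
      rw [hc, ← pow_mul, mul_comm, pow_mul, zeta_pow_d d hd, one_pow]
    by_cases hla : (l:ℕ) = i-1
    · rw [hz]; simp only [hla, if_pos rfl]; exact hcd
    · by_cases hlb : (l:ℕ) = j-1
      · have hzl : z l = c⁻¹ := by rw [hz]; simp only; rw [if_neg hla, if_pos hlb]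
        rw [hzl, inv_pow, hcd, inv_one]
      · have hzl : z l = 1 := by rw [hz]; simp only; rw [if_neg hla, if_neg hlb]
        rw [hzl, one_pow]
  · rw [← Finset.mul_prod_erase Finset.univ z (Finset.mem_univ a),
      ← Finset.mul_prod_erase _ z (Finset.mem_erase.2 ⟨(Ne.symm hab), Finset.mem_univ b⟩),
      Finset.prod_eq_one, hza, hzb]
    · field_simp
    · intro l hl
      rw [Finset.mem_erase, Finset.mem_erase] at hl
      have h1' : l ≠ b := hl.1
      have h2' : l ≠ a := hl.2.1
      simp only [hz]
      rw [if_neg, if_neg]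
      · intro h; exact h1' (Fin.ext h)
      · intro h; exact h2' (Fin.ext h)
  · intro k l; rw [hmono]; rfl
  · rw [isOfFinOrder_iff_pow_eq_one]
    refine ⟨2, by omega, ?_⟩
    ext : 1
    push_cast [pow_two]
    rw [hmono, monoMat_mul, Equiv.swap_mul_self]
    rw [show (fun l => z ((Equiv.swap a b) l) * z l) = fun _ => (1:ℂ) from ?_, monoMat_one]
    funext l
    by_cases hla : l = a
    · rw [hla, Equiv.swap_apply_left, hzb, hza, inv_mul_cancel₀ hc0]
    · by_cases hlb : l = b
      · rw [hlb, Equiv.swap_apply_right, hza, hzb, mul_inv_cancel₀ hc0]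
      · rw [Equiv.swap_apply_of_ne_of_ne hla hlb]
        have hzl : z l = 1 := by
          simp only [hz]
          rw [if_neg, if_neg]
          · intro h; exact hlb (Fin.ext h)
          · intro h; exact hla (Fin.ext h)
        rw [hzl, one_mul]
  · set φ : (Fin n → ℂ) →ₗ[ℂ] ℂ := LinearMap.proj b - c • LinearMap.proj a with hφ
    have hker : fixSpace t = LinearMap.ker φ := by
      ext x
      rw [mem_fixSpace, hmono, monoMat_mulVec, LinearMap.mem_ker]
      simp only [hφ, LinearMap.sub_apply, LinearMap.smul_apply, LinearMap.proj_apply,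
        smul_eq_mul, sub_eq_zero]
      constructor
      · intro h
        have h2 := congrFun h b
        simp only [Equiv.swap_inv, Equiv.swap_apply_right, hza] at h2
        exact h2.symm
      · intro h
        funext k
        by_cases hka : k = a
        · subst hka
          simp only [Equiv.swap_inv, Equiv.swap_apply_left, hzb]
          rw [h]; field_simp
        · by_cases hkb : k = b
          · subst hkb
            simp only [Equiv.swap_inv, Equiv.swap_apply_right, hza]
            exact h.symm
          · rw [Equiv.swap_inv, Equiv.swap_apply_of_ne_of_ne hka hkb]
            have hzk : z k = 1 := by
              simp only [hz]
              rw [if_neg, if_neg]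
              · intro h'; exact hkb (Fin.ext h')
              · intro h'; exact hka (Fin.ext h')
            rw [hzk, one_mul]
    rw [hker]
    have hsurj : LinearMap.range φ = ⊤ := by
      rw [LinearMap.range_eq_top]
      intro y
      refine ⟨y • (Pi.single b 1 : Fin n → ℂ), ?_⟩
      have hb1 : (Pi.single b 1 : Fin n → ℂ) b = 1 := Pi.single_eq_same b 1
      have ha0 : (Pi.single b 1 : Fin n → ℂ) a = 0 := Pi.single_eq_of_ne hab 1
      simp only [hφ, LinearMap.sub_apply, LinearMap.smul_apply, LinearMap.proj_apply,
        Pi.smul_apply, smul_eq_mul, hb1, ha0]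
      ring
    have hrn := LinearMap.finrank_range_add_finrank_ker φ
    rw [hsurj] at hrn
    simp only [finrank_top] at hrn
    have h1' : Module.finrank ℂ (Fin n → ℂ) = n := by simp
    have h2' : Module.finrank ℂ ℂ = 1 := Module.finrank_self ℂ
    omega

lemma fixSpace_one {n : ℕ} : fixSpace (1 : GLn n) = ⊤ := by
  ext x
  rw [mem_fixSpace]
  simp

lemma finrank_fix_prod (d n : ℕ) (l : List (GLn n)) (hl : ∀ t ∈ l, IsGddRefl d n t) :
    n ≤ Module.finrank ℂ (fixSpace l.prod) + l.length := by
  induction l with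
  | nil =>
      have h1 : Module.finrank ℂ (fixSpace (1 : GLn n)) = n := by
        rw [fixSpace_one, finrank_top]
        simp
      simp only [List.prod_nil, List.length_nil, add_zero, h1, le_refl]
      exact h1.symm.le
  | cons t w ih =>
      have ht : IsGddRefl d n t := hl t (List.mem_cons_self)
      have ihw := ih (fun u hu => hl u (List.mem_cons_of_mem t hu))
      have hsub : fixSpace t ⊓ fixSpace w.prod ≤ fixSpace (t * w.prod) := by
        intro x hx
        rw [Submodule.mem_inf, mem_fixSpace, mem_fixSpace] at hx
        rw [mem_fixSpace, Units.val_mul, ← Matrix.mulVec_mulVec, hx.2, hx.1]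
      have hmono := Submodule.finrank_mono hsub
      have hdim := Submodule.finrank_sup_add_finrank_inf_eq (fixSpace t) (fixSpace w.prod)
      have hle : Module.finrank ℂ ↥(fixSpace t ⊔ fixSpace w.prod) ≤ n := by
        have h2 := Submodule.finrank_le (fixSpace t ⊔ fixSpace w.prod)
        simpa using h2
      have h1 := ht.2.2
      rw [List.prod_cons, List.length_cons]
      omega

lemma row_eq {n : ℕ} (M : Matrix (Fin n) (Fin n) ℂ) (x : Fin n → ℂ) (hx : M.mulVec x = x)
    (k l0 : Fin n) (h0 : ∀ l, l ≠ l0 → M k l = 0) : x k = M k l0 * x l0 := by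
  have h1 := congrFun hx k
  rw [← h1]
  simp only [Matrix.mulVec, dotProduct]
  rw [Finset.sum_eq_single l0]
  · intro b _ hb; rw [h0 b hb, zero_mul]
  · intro h; exact absurd (Finset.mem_univ l0) h

lemma gamma_entry (d n k l : ℕ) (hk : k < n) (hl : l < n) :
    gammaMat d n ⟨k, hk⟩ ⟨l, hl⟩ =
      if l + 2 < n ∧ k = l + 1 then 1
      else if l + 2 = n ∧ k = 0 then zetaC d
      else if l + 1 = n ∧ k = l then (zetaC d)⁻¹
      else 0 := by
  simp only [gammaMat, Matrix.of_apply, Fin.val_mk, Fin.mk.injEq]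

lemma fix_gamma (d n : ℕ) (hd : 3 ≤ d) (hn : 2 ≤ n) (γ : GLn n)
    (hγ : (γ : Matrix (Fin n) (Fin n) ℂ) = gammaMat d n) :
    Module.finrank ℂ (fixSpace γ) = 0 := by
  have hbot : fixSpace γ = ⊥ := by
    rw [Submodule.eq_bot_iff]
    intro x hx
    rw [mem_fixSpace, hγ] at hx
    have hζ1 : zetaC d ≠ 1 := zeta_ne_one d (by omega)
    have hstep : ∀ m : ℕ, (hm : m + 1 ≤ n - 2) → x ⟨m+1, by omega⟩ = x ⟨m, by omega⟩ := by
      intro m hm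
      have h := row_eq _ x hx ⟨m+1, by omega⟩ ⟨m, by omega⟩ ?_
      · rw [h, gamma_entry, if_pos (by omega), one_mul]
      · intro l hl
        rcases l with ⟨l, hln⟩
        have hlm : l ≠ m := fun h' => hl (by simp [Fin.ext_iff, h'])
        rw [gamma_entry, if_neg (by omega), if_neg (by omega), if_neg (by omega)]
    have hchain : ∀ m : ℕ, (hm : m ≤ n - 2) → x ⟨m, by omega⟩ = x ⟨0, by omega⟩ := by
      intro m
      induction m with
      | zero => intro _; rfl
      | succ p ih =>
          intro hm
          rw [hstep p hm, ih (by omega)]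
    have h0 : x ⟨0, by omega⟩ = zetaC d * x ⟨n-2, by omega⟩ := by
      have h := row_eq _ x hx ⟨0, by omega⟩ ⟨n-2, by omega⟩ ?_
      · rw [h, gamma_entry, if_neg (by omega), if_pos (by omega)]
      · intro l hl
        rcases l with ⟨l, hln⟩
        have hlm : l ≠ n-2 := fun h' => hl (by simp [Fin.ext_iff, h'])
        rw [gamma_entry, if_neg (by omega), if_neg (by omega), if_neg (by omega)]
    have hlast : x ⟨n-1, by omega⟩ = (zetaC d)⁻¹ * x ⟨n-1, by omega⟩ := by
      have h := row_eq _ x hx ⟨n-1, by omega⟩ ⟨n-1, by omega⟩ ?_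
      · rw [gamma_entry, if_neg (by omega), if_neg (by omega), if_pos (by omega)] at h
        exact h
      · intro l hl
        rcases l with ⟨l, hln⟩
        have hlm : l ≠ n-1 := fun h' => hl (by simp [Fin.ext_iff, h'])
        rw [gamma_entry, if_neg (by omega), if_neg (by omega), if_neg (by omega)]
    have hx0 : x ⟨0, by omega⟩ = 0 := by
      have h2 : x ⟨n-2, by omega⟩ = x ⟨0, by omega⟩ := hchain (n-2) le_rfl
      rw [h2] at h0
      have hz : (1 - zetaC d) * x ⟨0, by omega⟩ = 0 := by
        rw [sub_mul, one_mul, ← h0, sub_self]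
      rcases mul_eq_zero.1 hz with h' | h'
      · exact absurd (sub_eq_zero.1 h').symm hζ1
      · exact h'
    have hxlast : x ⟨n-1, by omega⟩ = 0 := by
      have hz : (1 - (zetaC d)⁻¹) * x ⟨n-1, by omega⟩ = 0 := by
        rw [sub_mul, one_mul, ← hlast, sub_self]
      rcases mul_eq_zero.1 hz with h' | h'
      · exfalso
        have h2 : (zetaC d)⁻¹ = 1 := (sub_eq_zero.1 h').symm
        rw [inv_eq_one] at h2
        exact hζ1 h2
      · exact h'
    funext k
    rcases k with ⟨k, hk⟩
    by_cases hk2 : k ≤ n - 2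
    · rw [show (⟨k, hk⟩ : Fin n) = ⟨k, by omega⟩ from rfl, hchain k hk2, hx0]; rfl
    · rw [show (⟨k, hk⟩ : Fin n) = ⟨n-1, by omega⟩ from by simp only [Fin.mk.injEq]; omega]
      rw [hxlast]; rfl
  rw [hbot, finrank_bot]

lemma refl_conj1 (d n k : ℕ) (h2 : 2 ≤ k) (hk : k + 1 ≤ n) :
    reflMat d n k (k+1) 0 * reflMat d n (k-1) k 0 * reflMat d n k (k+1) 0
      = reflMat d n (k-1) (k+1) 0 := by
  have e1 := reflMat_eq_mono d n k (k+1) 0 (by omega) (by omega) (by omega)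
  have e2 := reflMat_eq_mono d n (k-1) k 0 (by omega) (by omega) (by omega)
  have e3 := reflMat_eq_mono d n (k-1) (k+1) 0 (by omega) (by omega) (by omega)
  simp only [pow_zero, inv_one, ite_self] at e1 e2 e3
  rw [e1, e2, e3, monoMat_mul, monoMat_mul]
  have hperm : Equiv.swap (⟨k-1, by omega⟩ : Fin n) ⟨k+1-1, by omega⟩ *
      Equiv.swap ⟨k-1-1, by omega⟩ ⟨k-1, by omega⟩ *
      Equiv.swap ⟨k-1, by omega⟩ ⟨k+1-1, by omega⟩ =
      Equiv.swap ⟨k-1-1, by omega⟩ ⟨k+1-1, by omega⟩ := by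
    rw [Equiv.swap_mul_swap_mul_swap (by simp [Fin.ext_iff]; omega) (by simp [Fin.ext_iff]; omega)]
    rw [Equiv.swap_comm]
  rw [hperm]
  congr 1
  funext l
  simp

lemma refl_conj2 (d n : ℕ) (hn : 2 ≤ n) :
    reflMat d n (n-1) n 1 * reflMat d n (n-1) n 0 * reflMat d n (n-1) n 1
      = reflMat d n (n-1) n 2 := by
  have e1 := reflMat_eq_mono d n (n-1) n 1 (by omega) (by omega) le_rfl
  have e0 := reflMat_eq_mono d n (n-1) n 0 (by omega) (by omega) le_rfl
  have e2 := reflMat_eq_mono d n (n-1) n 2 (by omega) (by omega) le_rfl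
  simp only [pow_zero, inv_one, ite_self] at e0
  rw [e1, e0, e2, monoMat_mul, monoMat_mul]
  rw [show Equiv.swap (⟨n-1-1, by omega⟩ : Fin n) ⟨n-1, by omega⟩ *
      Equiv.swap ⟨n-1-1, by omega⟩ ⟨n-1, by omega⟩ *
      Equiv.swap ⟨n-1-1, by omega⟩ ⟨n-1, by omega⟩ =
      Equiv.swap ⟨n-1-1, by omega⟩ ⟨n-1, by omega⟩ from by
    rw [Equiv.swap_mul_self, one_mul]]
  apply monoMat_congr
  intro l
  simp only [Equiv.swap_apply_self, mul_one]
  split_ifs <;> ring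

lemma listBefore_of_mem_append {α : Type*} {a b : α} {l1 l2 : List α}
    (ha : a ∈ l1) (hb : b ∈ l2) : ListBefore (l1 ++ l2) a b := by
  obtain ⟨s1, t1, rfl⟩ := List.append_of_mem ha
  obtain ⟨s2, t2, rfl⟩ := List.append_of_mem hb
  exact ⟨s1, t1 ++ s2, t2, by simp⟩

lemma listBefore_pad {α : Type*} {a b : α} {l : List α} (p q : List α)
    (h : ListBefore l a b) : ListBefore (p ++ l ++ q) a b := by
  obtain ⟨l1, l2, l3, rfl⟩ := h
  exact ⟨p ++ l1, l2, l3 ++ q, by simp⟩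

lemma listBefore_append_right {α : Type*} {a b : α} {l : List α} (q : List α)
    (h : ListBefore l a b) : ListBefore (l ++ q) a b := by
  have h2 := listBefore_pad [] q h
  rwa [List.nil_append] at h2

lemma listBefore_append_left {α : Type*} {a b : α} {l : List α} (p : List α)
    (h : ListBefore l a b) : ListBefore (p ++ l) a b := by
  have h2 := listBefore_pad p [] h
  rwa [List.append_nil] at h2

lemma listBefore_map {α β : Type*} {a b : α} {l : List α} (f : α → β)
    (h : ListBefore l a b) : ListBefore (l.map f) (f a) (f b) := by
  obtain ⟨l1, l2, l3, rfl⟩ := h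
  exact ⟨l1.map f, l2.map f, l3.map f, by simp⟩

lemma listBefore_range' (s i j m : ℕ) (h1 : s ≤ i) (hij : i < j) (hj : j < s + m) :
    ListBefore (List.range' s m) i j := by
  have hsplit : List.range' s m
      = List.range' s (i + 1 - s) ++ List.range' (i + 1) (m - (i + 1 - s)) := by
    have h := List.range'_append (s := s) (m := i + 1 - s) (n := m - (i + 1 - s)) (step := 1)
    simp only [one_mul, mul_one] at h
    rw [show s + (i + 1 - s) = i + 1 by omega] at h
    rw [show i + 1 - s + (m - (i + 1 - s)) = m by omega] at h
    exact h.symm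
  rw [hsplit]
  apply listBefore_of_mem_append
  · rw [List.mem_range'_1]; omega
  · rw [List.mem_range'_1]; omega

lemma listBefore_flatMap {α β : Type*} {i i' : α} {a b : β} {L : List α} (f : α → List β)
    (h : ListBefore L i i') (ha : a ∈ f i) (hb : b ∈ f i') : ListBefore (L.flatMap f) a b := by
  obtain ⟨l1, l2, l3, rfl⟩ := h
  obtain ⟨s1, t1, hf1⟩ := List.append_of_mem ha
  obtain ⟨s2, t2, hf2⟩ := List.append_of_mem hb
  refine ⟨l1.flatMap f ++ s1, t1 ++ l2.flatMap f ++ s2, t2 ++ l3.flatMap f, ?_⟩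
  simp [hf1, hf2]

lemma listBefore_flatMap_single {α β : Type*} {i : α} {a b : β} {L : List α} (f : α → List β)
    (hi : i ∈ L) (h : ListBefore (f i) a b) : ListBefore (L.flatMap f) a b := by
  obtain ⟨s, t, rfl⟩ := List.append_of_mem hi
  have h2 : (s ++ i :: t).flatMap f = s.flatMap f ++ f i ++ t.flatMap f := by simp
  rw [h2]
  exact listBefore_pad _ _ h

end Aux

/-- The word of simple reflections `(s₁, …, s_n)` (with
`s_i = ((i⁰ (i+1)⁰))` for `i < n` and `s_n = (((n−1)⁰ n¹))`) is a reduced `T`-word for `γ`,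
and for every `1 < k ≤ n` its left-shift at `k` has a descent at `k − 1` with respect to
the order `≺`. -/
theorem simple_word_reduced_and_left_shift_has_descent
    (d n : ℕ) (hd : 3 ≤ d) (hn : 2 ≤ n)
    (γ : GLn n) (hγ : (γ : Matrix (Fin n) (Fin n) ℂ) = gammaMat d n)
    (s : Fin n → GLn n)
    (hs : ∀ i : Fin n, (s i : Matrix (Fin n) (Fin n) ℂ) =
      if (i : ℕ) + 2 ≤ n then reflMat d n ((i : ℕ) + 1) ((i : ℕ) + 2) 0
      else reflMat d n (n - 1) n 1) :
    IsReducedTWord d n γ (List.ofFn s) ∧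
    ∀ k : ℕ, 1 < k → k ≤ n →
      HasDescentAt (precRel d n) (leftShiftAt (List.ofFn s) k) (k - 1) := by
  have hd0 : d ≠ 0 := by omega
  have hlen : (List.ofFn s).length = n := List.length_ofFn
  have hsrefl : ∀ i : Fin n, IsGddRefl d n (s i) := by
    intro i
    by_cases hi : (i:ℕ) + 2 ≤ n
    · exact isRefl_of_reflMat d n ((i:ℕ)+1) ((i:ℕ)+2) 0 hd0 (by omega) (by omega) hi _
        (by rw [hs i, if_pos hi])
    · exact isRefl_of_reflMat d n (n-1) n 1 hd0 (by omega) (by omega) le_rfl _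
        (by rw [hs i, if_neg hi])
  have hall : ∀ t ∈ List.ofFn s, IsGddRefl d n t := by
    intro t ht
    rw [List.mem_ofFn] at ht
    obtain ⟨i, rfl⟩ := ht
    exact hsrefl i
  have hsval : ∀ (m : ℕ) (hm : m < n) (hm2 : m + 2 ≤ n),
      ((s ⟨m, hm⟩ : GLn n) : Matrix (Fin n) (Fin n) ℂ) = reflMat d n (m+1) (m+2) 0 := by
    intro m hm hm2
    have h := hs ⟨m, hm⟩
    simp only [Fin.val_mk] at h
    rwa [if_pos hm2] at h
  have hpart : ∀ m : ℕ, m ≤ n - 1 →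
      (((List.ofFn s).take m).prod : Matrix (Fin n) (Fin n) ℂ) = cyc n m := by
    intro m
    induction m with
    | zero =>
        intro _
        simp only [List.take_zero, List.prod_nil, Units.val_one, cyc_zero]
    | succ p ih =>
        intro hp
        rw [List.prod_take_succ _ p (by omega), Units.val_mul, ih (by omega)]
        rw [List.getElem_ofFn (f := s) (i := p) (by rw [List.length_ofFn]; omega), hsval p (by omega) (by omega)]
        exact cyc_step d n p (by omega)
  have hfull : ∀ (p : ℕ) (hp : n = p + 1),
      (((List.ofFn s).take n).prod : Matrix (Fin n) (Fin n) ℂ) = gammaMat d n := by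
    intro p hp
    subst hp
    rw [List.prod_take_succ _ p (by omega), Units.val_mul, hpart p (by omega)]
    rw [List.getElem_ofFn (f := s) (i := p) (by rw [List.length_ofFn]; omega)]
    have h2 := hs ⟨p, by omega⟩
    simp only [Fin.val_mk] at h2
    rw [if_neg (by omega)] at h2
    rw [h2]
    have h3 := cyc_last d (p+1) (by omega)
    simpa using h3
  have hprodval : ((List.ofFn s).prod : Matrix (Fin n) (Fin n) ℂ) = gammaMat d n := by
    have h1 : List.ofFn s = (List.ofFn s).take n := by
      conv_lhs => rw [← List.take_length (l := List.ofFn s)]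
      rw [hlen]
    rw [h1]
    exact hfull (n-1) (by omega)
  have hprod : (List.ofFn s).prod = γ := Units.ext (by rw [hprodval, hγ])
  have hfix0 : Module.finrank ℂ (fixSpace γ) = 0 := fix_gamma d n hd hn γ hγ
  have hmem : n ∈ {k | ∃ l : List (GLn n), l.length = k ∧ (∀ t ∈ l, IsGddRefl d n t) ∧
      l.prod = γ} := ⟨List.ofFn s, hlen, hall, hprod⟩
  have hell : ellT d n γ = n := by
    apply le_antisymm
    · exact Nat.sInf_le hmem
    · apply le_csInf ⟨n, hmem⟩
      rintro k ⟨l, rfl, hr, hp⟩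
      have h2 := finrank_fix_prod d n l hr
      rw [hp, hfix0] at h2
      omega
  refine ⟨⟨hall, hprod, by rw [hlen, hell]⟩, ?_⟩
  intro k hk1 hkn
  have hgetD : ∀ (m : ℕ) (hm : m < n), (List.ofFn s).getD m 1 = s ⟨m, hm⟩ := by
    intro m hm
    rw [List.getD_eq_getElem _ _ (by omega), List.getElem_ofFn (f := s) (i := m) (by rw [List.length_ofFn]; omega)]
  -- the two relevant entries of the shifted word
  set a : GLn n := (List.ofFn s).getD (k-1) 1 with ha
  set b : GLn n := a * (List.ofFn s).getD (k-2) 1 * a with hb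
  have hL' : leftShiftAt (List.ofFn s) k
      = ((List.ofFn s).take (k-2) ++ [a, b]) ++ (List.ofFn s).drop k := rfl
  have hlen1 : ((List.ofFn s).take (k-2)).length = k-2 := by
    rw [List.length_take, hlen]; omega
  have hget1 : (leftShiftAt (List.ofFn s) k).getD (k-1-1) 1 = a := by
    rw [hL', List.getD_eq_getElem?_getD,
      List.getElem?_append_left (by simp [hlen1]; omega),
      List.getElem?_append_right (by omega : ((List.ofFn s).take (k-2)).length ≤ k-1-1),
      hlen1, show k-1-1 - (k-2) = 0 by omega]
    rfl
  have hget2 : (leftShiftAt (List.ofFn s) k).getD (k-1) 1 = b := by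
    rw [hL', List.getD_eq_getElem?_getD,
      List.getElem?_append_left (by simp [hlen1]; omega),
      List.getElem?_append_right (by omega : ((List.ofFn s).take (k-2)).length ≤ k-1),
      hlen1, show k-1 - (k-2) = 1 by omega]
    rfl
  show precRel d n ((leftShiftAt (List.ofFn s) k).getD (k-1) 1)
    ((leftShiftAt (List.ofFn s) k).getD (k-1-1) 1)
  rw [hget1, hget2]
  have haval : a = s ⟨k-1, by omega⟩ := hgetD (k-1) (by omega)
  have hpval : (List.ofFn s).getD (k-2) 1 = s ⟨k-2, by omega⟩ := hgetD (k-2) (by omega)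
  rcases (show k ≤ n - 1 ∨ k = n by omega) with hc | hc
  · -- the case 2 ≤ k ≤ n-1
    have hxm : (a : Matrix (Fin n) (Fin n) ℂ) = reflMat d n k (k+1) 0 := by
      rw [haval, hsval (k-1) (by omega) (by omega), show k-1+1 = k by omega,
        show k-1+2 = k+1 by omega]
    have hprm : ((List.ofFn s).getD (k-2) 1 : Matrix (Fin n) (Fin n) ℂ)
        = reflMat d n (k-1) k 0 := by
      rw [hpval, hsval (k-2) (by omega) (by omega), show k-2+1 = k-1 by omega,
        show k-2+2 = k by omega]
    have hym : (b : Matrix (Fin n) (Fin n) ℂ) = reflMat d n (k-1) (k+1) 0 := by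
      rw [hb, Units.val_mul, Units.val_mul, hxm, hprm]
      exact refl_conj1 d n k (by omega) (by omega)
    refine ⟨(k-1, k+1, 0), (k, k+1, 0), hym, hxm, ?_⟩
    rw [reflTriples]
    rcases (show k ≤ n - 2 ∨ k = n - 1 by omega) with hc2 | hc2
    · apply listBefore_append_right
      apply listBefore_flatMap _ (listBefore_range' 1 (k-1) k (n-2) (by omega) (by omega)
        (by omega))
      · exact List.mem_map.2 ⟨k+1, List.mem_range'_1.2 ⟨by omega, by omega⟩, rfl⟩
      · exact List.mem_map.2 ⟨k+1, List.mem_range'_1.2 ⟨by omega, by omega⟩, rfl⟩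
    · apply listBefore_append_left
      rw [show k+1 = n by omega]
      apply listBefore_flatMap _ (listBefore_range' 1 (k-1) k (n-1) (by omega) (by omega)
        (by omega))
      · exact List.mem_append_left _ (List.mem_cons_self)
      · exact List.mem_append_left _ (List.mem_cons_self)
  · -- the case k = n
    have hxm : (a : Matrix (Fin n) (Fin n) ℂ) = reflMat d n (n-1) n 1 := by
      have h := hs ⟨k-1, by omega⟩
      simp only [Fin.val_mk] at h
      rw [if_neg (by omega)] at h
      rw [haval, h]
    have hprm : ((List.ofFn s).getD (k-2) 1 : Matrix (Fin n) (Fin n) ℂ)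
        = reflMat d n (n-1) n 0 := by
      rw [hpval, hsval (k-2) (by omega) (by omega), show k-2+1 = n-1 by omega,
        show k-2+2 = n by omega]
    have hym : (b : Matrix (Fin n) (Fin n) ℂ) = reflMat d n (n-1) n 2 := by
      rw [hb, Units.val_mul, Units.val_mul, hxm, hprm]
      exact refl_conj2 d n hn
    refine ⟨(n-1, n, d-(d-2)), (n-1, n, d-(d-1)), ?_, ?_, ?_⟩
    · rw [show d-(d-2) = 2 by omega]; exact hym
    · rw [show d-(d-1) = 1 by omega]; exact hxm
    · rw [reflTriples]
      apply listBefore_append_left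
      apply listBefore_flatMap_single _
        (show n-1 ∈ List.range' 1 (n-1) from List.mem_range'_1.2 ⟨by omega, by omega⟩)
      have hM : ListBefore ((List.range' 1 (d-1)).map fun r => ((n-1 : ℕ), n, d - r))
          (n-1, n, d-(d-2)) (n-1, n, d-(d-1)) :=
        listBefore_map _ (listBefore_range' 1 (d-2) (d-1) (d-1) (by omega) (by omega) (by omega))
      have h2 := listBefore_pad [((n-1:ℕ), n, 0)]
        ((List.range' ((n-1)+1) (n-1-(n-1))).map fun j => ((n-1:ℕ), j, d-1)) hM
      simpa using h2
end

section
/- Let d ≥ 3 and n ≥ 2 be integers, and let w ∈ G(d,d,n) with w ≤_T γ. Then ℓ_T(w) = n − dim Fix(w), where Fix(w) = {x ∈ ℂ^n : wx = x}. -/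
open Matrix Complex

namespace Aux17
open Matrix

noncomputable def mono (n : ℕ) (σ : ℕ → ℕ) (z : ℕ → ℂ) : Matrix (Fin n) (Fin n) ℂ :=
  Matrix.of fun k l : Fin n => if (k : ℕ) = σ (l : ℕ) then z (l : ℕ) else 0

lemma mono_apply {n : ℕ} (σ : ℕ → ℕ) (z : ℕ → ℂ) (k l : Fin n) :
    mono n σ z k l = if (k : ℕ) = σ (l : ℕ) then z (l : ℕ) else 0 := rfl

lemma mono_mul {n : ℕ} (σ τ : ℕ → ℕ) (z w : ℕ → ℂ) (hτ : ∀ m : ℕ, m < n → τ m < n) :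
    mono n σ z * mono n τ w = mono n (fun m => σ (τ m)) (fun l => z (τ l) * w l) := by
  ext k l
  rw [Matrix.mul_apply, Finset.sum_eq_single (⟨τ l, hτ l l.isLt⟩ : Fin n)]
  · simp only [mono, Matrix.of_apply]
    by_cases h : (k : ℕ) = τ (l : ℕ) -- dummy
    all_goals by_cases h2 : (k : ℕ) = σ (τ (l : ℕ)) <;> simp [h2]
  · intro b _ hb
    have hb' : (b : ℕ) ≠ τ (l : ℕ) := fun h => hb (Fin.ext h)
    simp [mono, hb']
  · intro h; exact absurd (Finset.mem_univ _) h

lemma mono_mulVec {n : ℕ} (σ : ℕ → ℕ) (z : ℕ → ℂ) (x : Fin n → ℂ) (k : Fin n)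
    (c : ℕ) (hc : c < n) (hσc : σ c = (k : ℕ))
    (huniq : ∀ l : Fin n, σ (l : ℕ) = (k : ℕ) → (l : ℕ) = c) :
    (mono n σ z).mulVec x k = z c * x ⟨c, hc⟩ := by
  simp only [Matrix.mulVec, dotProduct]
  rw [Finset.sum_eq_single (⟨c, hc⟩ : Fin n)]
  · simp [mono, hσc]
  · intro b _ hb
    have hb' : σ (b : ℕ) ≠ (k : ℕ) := fun h => hb (Fin.ext (huniq b h))
    simp only [mono, Matrix.of_apply]
    rw [if_neg (fun h => hb' h.symm), zero_mul]
  · intro h; exact absurd (Finset.mem_univ _) h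

lemma mono_congr {n : ℕ} {σ σ' : ℕ → ℕ} {z z' : ℕ → ℂ}
    (hσ : ∀ m, m < n → σ m = σ' m) (hz : ∀ m, m < n → z m = z' m) :
    mono n σ z = mono n σ' z' := by
  ext k l
  rw [mono_apply, mono_apply, hσ l l.isLt, hz l l.isLt]

lemma mono_id {n : ℕ} {σ : ℕ → ℕ} {z : ℕ → ℂ} (hσ : ∀ m, m < n → σ m = m)
    (hz : ∀ m, m < n → z m = 1) : mono n σ z = 1 := by
  ext k l
  rw [mono_apply, hσ l l.isLt, hz l l.isLt, Matrix.one_apply]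
  simp [Fin.ext_iff]

def swapF (a b : ℕ) : ℕ → ℕ := fun m => if m = a then b else if m = b then a else m

noncomputable def zRefl (a b : ℕ) (u : ℂ) : ℕ → ℂ :=
  fun l => if l = a then u else if l = b then u⁻¹ else 1

lemma reflMat_eq_mono (d n i j s : ℕ) (hi : 1 ≤ i) (hij : i < j) (hj : j ≤ n) :
    reflMat d n i j s = mono n (swapF (i-1) (j-1)) (zRefl (i-1) (j-1) (zetaC d ^ s)) := by
  ext k l
  have hk := k.isLt; have hl := l.isLt
  simp only [reflMat, mono, Matrix.of_apply, swapF, zRefl, Fin.ext_iff]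
  split_ifs <;> first | rfl | omega

def gF (n : ℕ) : ℕ → ℕ := fun m => if m + 2 < n then m + 1 else if m + 2 = n then 0 else m

noncomputable def gz (d n : ℕ) : ℕ → ℂ := fun m =>
  if m + 2 = n then zetaC d else if m + 1 = n then (zetaC d)⁻¹ else 1

lemma gammaMat_eq_mono (d n : ℕ) : gammaMat d n = mono n (gF n) (gz d n) := by
  ext k l
  have hk := k.isLt; have hl := l.isLt
  simp only [gammaMat, mono, Matrix.of_apply, gF, gz, Fin.ext_iff]
  split_ifs <;> first | rfl | omega


def cF (k : ℕ) : ℕ → ℕ := fun m => if m < k then m + 1 else if m = k then 0 else m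

lemma swapF_lt {a b n : ℕ} (ha : a < n) (hb : b < n) : ∀ m : ℕ, m < n → swapF a b m < n := by
  intro m hm; simp only [swapF]; split_ifs <;> omega

lemma cProd (d n : ℕ) : ∀ k, k + 1 ≤ n →
    ((List.range' 1 k).map fun i => reflMat d n i (i+1) 0).prod = mono n (cF k) fun _ => 1
  | 0, h => by
      simp only [List.range', List.map_nil, List.prod_nil]
      exact (mono_id (fun m _ => by simp only [cF]; split_ifs <;> omega) (fun _ _ => rfl)).symm
  | (k+1), h => by
      rw [List.range'_concat, List.map_append, List.prod_append,
        cProd d n k (by omega)]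
      simp only [List.map_cons, List.map_nil, List.prod_cons, List.prod_nil, mul_one]
      rw [reflMat_eq_mono d n (1 + 1 * k) (1 + 1 * k + 1) 0 (by omega) (by omega) (by omega)]
      rw [mono_mul _ _ _ _ (swapF_lt (by omega) (by omega))]
      apply mono_congr
      · intro m hm
        simp only [cF, swapF]
        split_ifs <;> omega
      · intro m hm
        simp only [zRefl, pow_zero, inv_one, one_mul]
        split_ifs <;> rfl

lemma gamma_factor (d n : ℕ) (hn : 2 ≤ n) :
    (((List.range' 1 (n-2)).map fun i => reflMat d n i (i+1) 0).prod)
      * (reflMat d n (n-1) n 0 * reflMat d n (n-1) n 1) = gammaMat d n := by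
  rw [cProd d n (n-2) (by omega),
    reflMat_eq_mono d n (n-1) n 0 (by omega) (by omega) le_rfl,
    reflMat_eq_mono d n (n-1) n 1 (by omega) (by omega) le_rfl,
    mono_mul _ _ _ _ (swapF_lt (by omega) (by omega)),
    mono_mul _ _ _ _ (fun m hm => swapF_lt (by omega) (by omega) _ (swapF_lt (by omega) (by omega) m hm)),
    gammaMat_eq_mono]
  apply mono_congr
  · intro m hm
    simp only [cF, swapF, gF]
    split_ifs <;> omega
  · intro m hm
    simp only [zRefl, swapF, gz, pow_zero, pow_one, inv_one, one_mul]
    split_ifs <;> first | rfl | omega | simp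

lemma reflMat_mul_self (d n i j s : ℕ) (hi : 1 ≤ i) (hij : i < j) (hj : j ≤ n) :
    reflMat d n i j s * reflMat d n i j s = 1 := by
  have hu : zetaC d ^ s ≠ 0 := pow_ne_zero _ (by unfold zetaC; exact Complex.exp_ne_zero _)
  rw [reflMat_eq_mono d n i j s hi hij hj,
    mono_mul _ _ _ _ (swapF_lt (by omega) (by omega))]
  apply mono_id
  · intro m hm; simp only [swapF]; split_ifs <;> omega
  · intro m hm
    simp only [zRefl, swapF]
    split_ifs <;> first | omega | exact inv_mul_cancel₀ hu | exact mul_inv_cancel₀ hu | simp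




noncomputable def reflGL (d n i j s : ℕ) : GLn n :=
  if h : 1 ≤ i ∧ i < j ∧ j ≤ n then
    ⟨reflMat d n i j s, reflMat d n i j s,
      reflMat_mul_self d n i j s h.1 h.2.1 h.2.2,
      reflMat_mul_self d n i j s h.1 h.2.1 h.2.2⟩
  else 1

lemma val_reflGL {d n i j s : ℕ} (hi : 1 ≤ i) (hij : i < j) (hj : j ≤ n) :
    ((reflGL d n i j s : GLn n) : Matrix (Fin n) (Fin n) ℂ) = reflMat d n i j s := by
  rw [reflGL, dif_pos ⟨hi, hij, hj⟩]

lemma mem_fixSpace {n : ℕ} {w : GLn n} {x : Fin n → ℂ} :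
    x ∈ fixSpace w ↔ (w : Matrix (Fin n) (Fin n) ℂ).mulVec x = x := by
  simp [fixSpace, LinearMap.mem_ker, LinearMap.sub_apply, Matrix.mulVecLin_apply,
    sub_eq_zero]

lemma finrank_fun {n : ℕ} : Module.finrank ℂ (Fin n → ℂ) = n := by
  rw [Module.finrank_pi, Fintype.card_fin]

lemma fix_reflGL {d n i j s : ℕ} (hi : 1 ≤ i) (hij : i < j) (hj : j ≤ n) :
    fixSpace (reflGL d n i j s) = LinearMap.ker
      ((zetaC d ^ s) • (LinearMap.proj (⟨i-1, by omega⟩ : Fin n) :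
          (Fin n → ℂ) →ₗ[ℂ] ℂ)
        - LinearMap.proj (⟨j-1, by omega⟩ : Fin n)) := by
  have hu : zetaC d ^ s ≠ 0 := pow_ne_zero _ (by unfold zetaC; exact Complex.exp_ne_zero _)
  ext x
  rw [mem_fixSpace, val_reflGL hi hij hj, reflMat_eq_mono d n i j s hi hij hj,
    LinearMap.mem_ker, LinearMap.sub_apply, LinearMap.smul_apply, LinearMap.proj_apply,
    LinearMap.proj_apply, sub_eq_zero]
  constructor
  · intro hx
    have := congrFun hx ⟨j-1, by omega⟩
    rw [mono_mulVec _ _ _ _ (i-1) (by omega)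
      (by simp only [swapF]; split_ifs <;> omega)
      (fun l hl => by have := l.isLt; simp only [swapF] at hl ⊢; split_ifs at hl <;> omega)] at this
    rw [show zRefl (i-1) (j-1) (zetaC d ^ s) (i-1) = zetaC d ^ s by
      simp [zRefl]] at this
    rw [smul_eq_mul]
    exact this
  · intro hx
    funext k
    have hk := k.isLt
    rw [smul_eq_mul] at hx
    by_cases h1 : (k : ℕ) = i - 1
    · rw [mono_mulVec _ _ _ _ (j-1) (by omega)
        (by simp only [swapF]; split_ifs <;> omega)
        (fun l hl => by have := l.isLt; simp only [swapF] at hl ⊢; split_ifs at hl <;> omega)]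
      rw [show zRefl (i-1) (j-1) (zetaC d ^ s) (j-1) = (zetaC d ^ s)⁻¹ by
        simp only [zRefl]; rw [if_neg (by omega)]; simp]
      rw [← hx, inv_mul_cancel_left₀ hu]
      congr 1
      exact Fin.ext h1.symm
    · by_cases h2 : (k : ℕ) = j - 1
      · rw [mono_mulVec _ _ _ _ (i-1) (by omega)
          (by simp only [swapF]; split_ifs <;> omega)
          (fun l hl => by have := l.isLt; simp only [swapF] at hl ⊢; split_ifs at hl <;> omega)]
        rw [show zRefl (i-1) (j-1) (zetaC d ^ s) (i-1) = zetaC d ^ s by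
          simp [zRefl]]
        rw [hx]
        congr 1
        exact Fin.ext h2.symm
      · rw [mono_mulVec _ _ _ _ (k : ℕ) (by omega)
          (by simp only [swapF]; split_ifs <;> omega)
          (fun l hl => by have := l.isLt; simp only [swapF] at hl ⊢; split_ifs at hl <;> omega)]
        rw [show zRefl (i-1) (j-1) (zetaC d ^ s) (k : ℕ) = 1 by
          simp only [zRefl]; rw [if_neg (by omega), if_neg (by omega)]]
        rw [one_mul]

lemma finrank_fix_reflGL {d n i j s : ℕ} (hi : 1 ≤ i) (hij : i < j) (hj : j ≤ n) :
    Module.finrank ℂ (fixSpace (reflGL d n i j s)) = n - 1 := by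
  rw [fix_reflGL hi hij hj]
  set a : Fin n := ⟨i-1, by omega⟩
  set b : Fin n := ⟨j-1, by omega⟩
  have hab : a ≠ b := by
    intro h
    have : (i-1 : ℕ) = (j-1 : ℕ) := congrArg Fin.val h
    omega
  set φ : (Fin n → ℂ) →ₗ[ℂ] ℂ :=
    (zetaC d ^ s) • (LinearMap.proj a : (Fin n → ℂ) →ₗ[ℂ] ℂ) - LinearMap.proj b with hφ
  have hsurj : LinearMap.range φ = ⊤ := by
    rw [LinearMap.range_eq_top]
    intro c
    refine ⟨fun m => if m = b then -c else 0, ?_⟩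
    simp only [hφ, LinearMap.sub_apply, LinearMap.smul_apply, LinearMap.proj_apply]
    rw [if_neg hab]
    simp
  have hrn := LinearMap.finrank_range_add_finrank_ker φ
  rw [hsurj, finrank_top, finrank_fun, Module.finrank_self] at hrn
  omega


lemma isGddRefl_reflGL {d n i j s : ℕ} (hd : 1 ≤ d) (hi : 1 ≤ i) (hij : i < j) (hj : j ≤ n) :
    IsGddRefl d n (reflGL d n i j s) := by
  have hu : zetaC d ^ s ≠ 0 := pow_ne_zero _ (by unfold zetaC; exact Complex.exp_ne_zero _)
  have hζd : zetaC d ^ d = 1 := (Complex.isPrimitiveRoot_exp d (by omega)).pow_eq_one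
  refine ⟨?_, ?_, finrank_fix_reflGL hi hij hj⟩
  · refine ⟨Equiv.swap ⟨i-1, by omega⟩ ⟨j-1, by omega⟩,
      fun l => zRefl (i-1) (j-1) (zetaC d ^ s) (l : ℕ), ?_, ?_, ?_⟩
    · intro l
      simp only [zRefl]
      split_ifs
      · rw [← pow_mul, mul_comm s d, pow_mul, hζd, one_pow]
      · rw [inv_pow, ← pow_mul, mul_comm s d, pow_mul, hζd, one_pow, inv_one]
      · exact one_pow d
    · rw [Finset.prod_congr rfl (g := fun l : Fin n =>
        (if l = (⟨i-1, by omega⟩ : Fin n) then zetaC d ^ s else 1) *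
        (if l = (⟨j-1, by omega⟩ : Fin n) then (zetaC d ^ s)⁻¹ else 1))]
      · rw [Finset.prod_mul_distrib, Finset.prod_ite_eq', Finset.prod_ite_eq',
          if_pos (Finset.mem_univ _), if_pos (Finset.mem_univ _), mul_inv_cancel₀ hu]
      · intro l _
        by_cases h1 : (l : ℕ) = i - 1
        · rw [if_pos (Fin.ext h1), if_neg (fun h => by
            have : (l : ℕ) = j - 1 := congrArg Fin.val h; omega), mul_one]
          simp only [zRefl]; rw [if_pos h1]
        · by_cases h2 : (l : ℕ) = j - 1
          · rw [if_neg (fun h => h1 (congrArg Fin.val h)), if_pos (Fin.ext h2), one_mul]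
            simp only [zRefl]; rw [if_neg h1, if_pos h2]
          · rw [if_neg (fun h => h1 (congrArg Fin.val h)),
              if_neg (fun h => h2 (congrArg Fin.val h)), mul_one]
            simp only [zRefl]; rw [if_neg h1, if_neg h2]
    · intro k l
      rw [val_reflGL hi hij hj, reflMat_eq_mono d n i j s hi hij hj, mono_apply]
      by_cases h1 : (l : ℕ) = i - 1
      · rw [show l = (⟨i-1, by omega⟩ : Fin n) from Fin.ext h1, Equiv.swap_apply_left]
        rw [show swapF (i-1) (j-1) (((⟨i-1, by omega⟩ : Fin n)) : ℕ) = j - 1 from by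
          simp [swapF]]
        by_cases hk : (k : ℕ) = j - 1
        · rw [if_pos hk, if_pos (Fin.ext hk)]
        · rw [if_neg hk, if_neg (fun h => hk (congrArg Fin.val h))]
      · by_cases h2 : (l : ℕ) = j - 1
        · rw [show l = (⟨j-1, by omega⟩ : Fin n) from Fin.ext h2, Equiv.swap_apply_right]
          rw [show swapF (i-1) (j-1) (((⟨j-1, by omega⟩ : Fin n)) : ℕ) = i - 1 from by
            simp only [swapF]; rw [if_neg (by omega)]; simp]
          by_cases hk : (k : ℕ) = i - 1
          · rw [if_pos hk, if_pos (Fin.ext hk)]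
          · rw [if_neg hk, if_neg (fun h => hk (congrArg Fin.val h))]
        · rw [Equiv.swap_apply_of_ne_of_ne (fun h => h1 (congrArg Fin.val h))
            (fun h => h2 (congrArg Fin.val h))]
          rw [show swapF (i-1) (j-1) ((l : ℕ)) = (l : ℕ) from by
            simp only [swapF]; rw [if_neg h1, if_neg h2]]
          by_cases hk : (k : ℕ) = (l : ℕ)
          · rw [if_pos hk, if_pos (Fin.ext hk)]
          · rw [if_neg hk, if_neg (fun h => hk (congrArg Fin.val h))]
  · refine isOfFinOrder_iff_pow_eq_one.mpr ⟨2, by omega, ?_⟩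
    apply Units.ext
    rw [Units.val_pow_eq_pow_val, val_reflGL hi hij hj, pow_two,
      reflMat_mul_self d n i j s hi hij hj, Units.val_one]

lemma fix_gamma {d n : ℕ} (hd : 3 ≤ d) (hn : 2 ≤ n) (γ : GLn n)
    (hγ : (γ : Matrix (Fin n) (Fin n) ℂ) = gammaMat d n) : fixSpace γ = ⊥ := by
  have hζ1 : zetaC d ≠ 1 := (Complex.isPrimitiveRoot_exp d (by omega)).ne_one (by omega)
  rw [eq_bot_iff]
  intro x hx
  rw [mem_fixSpace, hγ, gammaMat_eq_mono] at hx
  rw [Submodule.mem_bot]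
  have E1 : ∀ m : ℕ, (hm : m + 2 < n) → x ⟨m + 1, by omega⟩ = x ⟨m, by omega⟩ := by
    intro m h
    have h0 := congrFun hx ⟨m + 1, by omega⟩
    rw [mono_mulVec _ _ _ _ m (by omega)
      (by show gF n m = m + 1; simp only [gF]; split_ifs <;> omega)
      (by intro l hl
          have h2 : gF n (l : ℕ) = m + 1 := hl
          have := l.isLt
          simp only [gF] at h2; split_ifs at h2 <;> omega)] at h0
    rw [show gz d n m = 1 from by
      simp only [gz]; rw [if_neg (by omega), if_neg (by omega)], one_mul] at h0
    exact h0.symm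
  have E2 : x ⟨0, by omega⟩ = zetaC d * x ⟨n - 2, by omega⟩ := by
    have h0 := congrFun hx ⟨0, by omega⟩
    rw [mono_mulVec _ _ _ _ (n - 2) (by omega)
      (by show gF n (n - 2) = 0; simp only [gF]; split_ifs <;> omega)
      (by intro l hl
          have h2 : gF n (l : ℕ) = 0 := hl
          have := l.isLt
          simp only [gF] at h2; split_ifs at h2 <;> omega)] at h0
    rw [show gz d n (n - 2) = zetaC d from by
      simp only [gz]; rw [if_pos (by omega)]] at h0
    exact h0.symm
  have E3 : x ⟨n - 1, by omega⟩ = (zetaC d)⁻¹ * x ⟨n - 1, by omega⟩ := by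
    have h0 := congrFun hx ⟨n - 1, by omega⟩
    rw [mono_mulVec _ _ _ _ (n - 1) (by omega)
      (by show gF n (n - 1) = n - 1; simp only [gF]; split_ifs <;> omega)
      (by intro l hl
          have h2 : gF n (l : ℕ) = n - 1 := hl
          have := l.isLt
          simp only [gF] at h2; split_ifs at h2 <;> omega)] at h0
    rw [show gz d n (n - 1) = (zetaC d)⁻¹ from by
      simp only [gz]; rw [if_neg (by omega), if_pos (by omega)]] at h0
    exact h0.symm
  have key : ∀ m : ℕ, (hm : m ≤ n - 2) → x ⟨m, by omega⟩ = x ⟨0, by omega⟩ := by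
    intro m
    induction m with
    | zero => intro _; rfl
    | succ p ih => intro h; exact (E1 p (by omega)).trans (ih (by omega))
  have hx0 : x ⟨0, by omega⟩ = 0 := by
    have h2 := E2
    rw [key (n - 2) le_rfl] at h2
    have h3 : (1 - zetaC d) * x ⟨0, by omega⟩ = 0 := by linear_combination h2
    rcases mul_eq_zero.mp h3 with h | h
    · exact absurd (by linear_combination -h) hζ1
    · exact h
  have hxn : x ⟨n - 1, by omega⟩ = 0 := by
    have h3 : (1 - (zetaC d)⁻¹) * x ⟨n - 1, by omega⟩ = 0 := by linear_combination E3
    rcases mul_eq_zero.mp h3 with h | h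
    · exact absurd (inv_eq_one.mp (by linear_combination -h)) hζ1
    · exact h
  funext k
  by_cases hk : (k : ℕ) = n - 1
  · rw [show k = (⟨n - 1, by omega⟩ : Fin n) from Fin.ext hk]
    exact hxn
  · have hk2 : (k : ℕ) ≤ n - 2 := by have := k.isLt; omega
    exact (key (k : ℕ) hk2).trans hx0

lemma fixSpace_one {n : ℕ} : fixSpace (1 : GLn n) = ⊤ := by
  rw [fixSpace, Units.val_one, Matrix.mulVecLin_one, sub_self, LinearMap.ker_zero]

lemma fix_mul_le {n : ℕ} (u v : GLn n) : fixSpace u ⊓ fixSpace v ≤ fixSpace (u * v) := by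
  intro x hx
  rw [Submodule.mem_inf, mem_fixSpace, mem_fixSpace] at hx
  rw [mem_fixSpace, Units.val_mul, ← Matrix.mulVec_mulVec, hx.2, hx.1]

lemma le_finrank_add_length (d n : ℕ) :
    ∀ l : List (GLn n), (∀ t ∈ l, IsGddRefl d n t) →
      n ≤ Module.finrank ℂ (fixSpace l.prod) + l.length := by
  intro l
  induction l with
  | nil =>
    intro _
    rw [List.prod_nil, List.length_nil, fixSpace_one, finrank_top, finrank_fun]
    omega
  | cons t l ih =>
    intro h
    have ht := (h t (List.mem_cons_self)).2.2
    have hl := ih fun t' ht' => h t' (List.mem_cons_of_mem _ ht')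
    have h1 : fixSpace t ⊓ fixSpace l.prod ≤ fixSpace (t * l.prod) := fix_mul_le t l.prod
    have h2 := Submodule.finrank_sup_add_finrank_inf_eq (fixSpace t) (fixSpace l.prod)
    have h3 : Module.finrank ℂ ↥(fixSpace t ⊔ fixSpace l.prod) ≤ n := by
      have := Submodule.finrank_le (fixSpace t ⊔ fixSpace l.prod)
      rwa [finrank_fun] at this
    have h4 : Module.finrank ℂ ↥(fixSpace t ⊓ fixSpace l.prod) ≤
        Module.finrank ℂ (fixSpace (t * l.prod)) := Submodule.finrank_mono h1
    rw [List.prod_cons, List.length_cons]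
    omega

def Pset (d n : ℕ) (w : GLn n) : Prop :=
  ∃ l : List (GLn n), (∀ t ∈ l, IsGddRefl d n t) ∧ l.prod = w

lemma Pset.mul {d n : ℕ} {u v : GLn n} : Pset d n u → Pset d n v → Pset d n (u * v) := by
  rintro ⟨l1, h1, rfl⟩ ⟨l2, h2, rfl⟩
  refine ⟨l1 ++ l2, ?_, List.prod_append⟩
  intro t ht
  rw [List.mem_append] at ht
  rcases ht with h | h
  exacts [h1 t h, h2 t h]

lemma Pset_refl_inv {d n : ℕ} {t : GLn n} (h : IsGddRefl d n t) : Pset d n t⁻¹ := by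
  refine ⟨List.replicate (orderOf t - 1) t, ?_, ?_⟩
  · intro t' ht'; rw [List.eq_of_mem_replicate ht']; exact h
  · rw [List.prod_replicate]
    have hpos : 0 < orderOf t := h.2.1.orderOf_pos
    have h1 : t * t ^ (orderOf t - 1) = 1 := by
      rw [← pow_succ', Nat.sub_add_cancel hpos]
      exact pow_orderOf_eq_one t
    exact (inv_eq_of_mul_eq_one_right h1).symm

lemma Pset_inv_list {d n : ℕ} : ∀ l : List (GLn n), (∀ t ∈ l, IsGddRefl d n t) →
    Pset d n l.prod⁻¹ := by
  intro l
  induction l with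
  | nil => exact fun _ => ⟨[], by simp, by simp⟩
  | cons t l ih =>
    intro hl
    rw [List.prod_cons, _root_.mul_inv_rev]
    exact Pset.mul (ih fun t' ht' => hl t' (List.mem_cons_of_mem _ ht'))
      (Pset_refl_inv (hl t (List.mem_cons_self)))

lemma Pset_inv {d n : ℕ} {u : GLn n} (h : Pset d n u) : Pset d n u⁻¹ := by
  obtain ⟨l, hl, rfl⟩ := h
  exact Pset_inv_list l hl

lemma ellT_of_not_Pset {d n : ℕ} {w : GLn n} (h : ¬ Pset d n w) : ellT d n w = 0 := by
  rw [ellT]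
  convert Nat.sInf_empty
  rw [Set.eq_empty_iff_forall_notMem]
  rintro k ⟨l, _, hl, hp⟩
  exact h ⟨l, hl, hp⟩

lemma exists_min_word {d n : ℕ} {w : GLn n} (h : Pset d n w) :
    ∃ l : List (GLn n), (∀ t ∈ l, IsGddRefl d n t) ∧ l.prod = w ∧ l.length = ellT d n w := by
  obtain ⟨l0, h1, h2⟩ := h
  obtain ⟨l, hlen, hrefl, hprod⟩ :=
    Nat.sInf_mem (⟨l0.length, l0, rfl, h1, h2⟩ : Set.Nonempty
      {k | ∃ l : List (GLn n), l.length = k ∧ (∀ t ∈ l, IsGddRefl d n t) ∧ l.prod = w})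
  exact ⟨l, hrefl, hprod, hlen⟩

noncomputable def Ldef (d n : ℕ) : List (GLn n) :=
  ((List.range' 1 (n-2)).map fun i => reflGL d n i (i+1) 0) ++
    [reflGL d n (n-1) n 0, reflGL d n (n-1) n 1]

lemma Ldef_length {d n : ℕ} (hn : 2 ≤ n) : (Ldef d n).length = n := by
  simp only [Ldef, List.length_append, List.length_map, List.length_range',
    List.length_cons, List.length_nil]
  omega

lemma Ldef_refl {d n : ℕ} (hd : 1 ≤ d) (hn : 2 ≤ n) : ∀ t ∈ Ldef d n, IsGddRefl d n t := by
  intro t ht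
  rw [Ldef, List.mem_append] at ht
  rcases ht with ht | ht
  · rw [List.mem_map] at ht
    obtain ⟨i, hi, rfl⟩ := ht
    rw [List.mem_range'_1] at hi
    exact isGddRefl_reflGL hd hi.1 (by omega) (by omega)
  · rw [List.mem_cons] at ht
    rcases ht with rfl | ht
    · exact isGddRefl_reflGL hd (by omega) (by omega) le_rfl
    · rw [List.mem_singleton] at ht
      subst ht
      exact isGddRefl_reflGL hd (by omega) (by omega) le_rfl

lemma val_list_prod {n : ℕ} : ∀ l : List (GLn n),
    ((l.prod : GLn n) : Matrix (Fin n) (Fin n) ℂ) = (l.map Units.val).prod := by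
  intro l
  induction l with
  | nil => simp
  | cons t l ih => rw [List.prod_cons, Units.val_mul, ih, List.map_cons, List.prod_cons]

lemma Ldef_prod {d n : ℕ} (hn : 2 ≤ n) (γ : GLn n)
    (hγ : (γ : Matrix (Fin n) (Fin n) ℂ) = gammaMat d n) : (Ldef d n).prod = γ := by
  apply Units.ext
  rw [val_list_prod, hγ, ← gamma_factor d n hn,
    Ldef, List.map_append, List.map_map, List.prod_append]
  congr 1
  · apply congrArg List.prod
    apply List.map_congr_left
    intro i hi
    rw [List.mem_range'_1] at hi
    exact val_reflGL hi.1 (by omega) (by omega)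
  · simp only [List.map_cons, List.map_nil, List.prod_cons, List.prod_nil, mul_one]
    rw [val_reflGL (n := n) (by omega) (by omega) le_rfl,
      val_reflGL (n := n) (by omega) (by omega) le_rfl]

lemma ellT_gamma {d n : ℕ} (hd : 3 ≤ d) (hn : 2 ≤ n) (γ : GLn n)
    (hγ : (γ : Matrix (Fin n) (Fin n) ℂ) = gammaMat d n) : ellT d n γ = n := by
  have hmem : n ∈ {k | ∃ l : List (GLn n), l.length = k ∧ (∀ t ∈ l, IsGddRefl d n t) ∧
      l.prod = γ} := ⟨Ldef d n, Ldef_length hn, Ldef_refl (by omega) hn, Ldef_prod hn γ hγ⟩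
  refine le_antisymm (Nat.sInf_le hmem) ?_
  obtain ⟨l, hlen, hrefl, hprod⟩ := Nat.sInf_mem (⟨n, hmem⟩ : Set.Nonempty _)
  have h1 := le_finrank_add_length d n l hrefl
  rw [hprod, fix_gamma hd hn γ hγ, finrank_bot] at h1
  rw [ellT]
  omega

end Aux17

/-- For `w ≤_T γ` in `G(d,d,n)`, one has
`ℓ_T(w) = n − dim Fix(w)`. -/
theorem length_eq_codim_fix
    (d n : ℕ) (hd : 3 ≤ d) (hn : 2 ≤ n)
    (γ w : GLn n) (hγ : (γ : Matrix (Fin n) (Fin n) ℂ) = gammaMat d n)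
    (hw : absLe d n w γ) :
    ellT d n w = n - Module.finrank ℂ (fixSpace w) := by
  have hγn : ellT d n γ = n := Aux17.ellT_gamma hd hn γ hγ
  have hPγ : Aux17.Pset d n γ :=
    ⟨Aux17.Ldef d n, Aux17.Ldef_refl (by omega) hn, Aux17.Ldef_prod hn γ hγ⟩
  have hw' : ellT d n γ = ellT d n w + ellT d n (w⁻¹ * γ) := hw
  rw [hγn] at hw'
  have hPw : Aux17.Pset d n w := by
    by_contra hP
    have hP2 : ¬ Aux17.Pset d n (w⁻¹ * γ) := by
      intro h
      apply hP
      have he : w = γ * (w⁻¹ * γ)⁻¹ := by group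
      rw [he]
      exact Aux17.Pset.mul hPγ (Aux17.Pset_inv h)
    rw [Aux17.ellT_of_not_Pset hP, Aux17.ellT_of_not_Pset hP2] at hw'
    omega
  have hPg : Aux17.Pset d n (w⁻¹ * γ) := Aux17.Pset.mul (Aux17.Pset_inv hPw) hPγ
  obtain ⟨l1, h1r, h1p, h1len⟩ := Aux17.exists_min_word hPw
  obtain ⟨l2, h2r, h2p, h2len⟩ := Aux17.exists_min_word hPg
  have hb1 := Aux17.le_finrank_add_length d n l1 h1r
  rw [h1p, h1len] at hb1
  have hb2 := Aux17.le_finrank_add_length d n l2 h2r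
  rw [h2p, h2len] at hb2
  have hbot : fixSpace w ⊓ fixSpace (w⁻¹ * γ) = ⊥ := by
    rw [eq_bot_iff]
    intro x hx
    have h3 := Aux17.fix_mul_le w (w⁻¹ * γ) hx
    rw [mul_inv_cancel_left, Aux17.fix_gamma hd hn γ hγ] at h3
    exact h3
  have hsum := Submodule.finrank_sup_add_finrank_inf_eq (fixSpace w) (fixSpace (w⁻¹ * γ))
  rw [hbot, finrank_bot] at hsum
  have hsle : Module.finrank ℂ ↥(fixSpace w ⊔ fixSpace (w⁻¹ * γ)) ≤ n := by
    have h4 := Submodule.finrank_le (fixSpace w ⊔ fixSpace (w⁻¹ * γ))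
    rwa [Aux17.finrank_fun] at h4
  have hfle : Module.finrank ℂ (fixSpace w) ≤ n := by
    have h4 := Submodule.finrank_le (fixSpace w)
    rwa [Aux17.finrank_fun] at h4
  omega
end
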